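/- arXiv:1108.1886 — 2 statements merged into one kernel-verified Lean document; each statement's English description precedes it below -/
import Mathlib

section
/- Let Σ be a strongly symmetric smooth fan in a lattice N ⊆ ℝ^r. Then the arrangement A = { span(τ) : τ ∈ Σ(r-1) } is a simplicial arrangement, and there exists a finite set R ⊆ (ℝ^r)* with A = {α^⊥ : α ∈ R}, ℝα ∩ R = {±α} for all α ∈ R, such that (A, R) is a crystallographic arrangement. Concretely, R can be taken as the union over all maximal cones σ ∈ Σ(r) of the dual bases of the ℤ-bases of N generating σ. -/
open scoped Classical Pointwise BigOperators

noncomputable section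

abbrev Vr (r : ℕ) : Type := Fin r → ℝ

/-- The convex cone generated by a finite set of vectors. -/
def coneGen {M : Type*} [AddCommGroup M] [Module ℝ M] (s : Finset M) : Set M :=
  { x | ∃ c : M → ℝ, (∀ v, 0 ≤ c v) ∧ x = ∑ v ∈ s, c v • v }

/-- Dimension of the linear span of a set. -/
def spanDim {M : Type*} [AddCommGroup M] [Module ℝ M] (s : Set M) : ℕ :=
  Module.finrank ℝ (Submodule.span ℝ s)

/-- A (linear) hyperplane: the kernel of a nonzero linear functional. -/
def IsHyp {M : Type*} [AddCommGroup M] [Module ℝ M] (H : Set M) : Prop :=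
  ∃ f : M →ₗ[ℝ] ℝ, f ≠ 0 ∧ H = {x | f x = 0}

/-- A strongly convex rational polyhedral cone with respect to the lattice `N`. -/
def IsNCone {r : ℕ} (N : AddSubgroup (Vr r)) (σ : Set (Vr r)) : Prop :=
  ∃ s : Finset (Vr r), ↑s ⊆ (N : Set (Vr r)) ∧ σ = coneGen s ∧ σ ∩ (-σ) ⊆ {0}

/-- `τ` is a face of `σ`. -/
def IsFaceOf {M : Type*} [AddCommGroup M] [Module ℝ M] (τ σ : Set M) : Prop :=
  ∃ m : M →ₗ[ℝ] ℝ, (∀ x ∈ σ, 0 ≤ m x) ∧ τ = σ ∩ {x | m x = 0}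

/-- A fan in the lattice `N`. -/
structure IsFan {r : ℕ} (N : AddSubgroup (Vr r)) (F : Set (Set (Vr r))) : Prop where
  finite : F.Finite
  nonempty : F.Nonempty
  cones : ∀ σ ∈ F, IsNCone N σ
  faces : ∀ σ ∈ F, ∀ τ : Set (Vr r), IsFaceOf τ σ → τ ∈ F
  inter : ∀ σ₁ ∈ F, ∀ σ₂ ∈ F, IsFaceOf (σ₁ ∩ σ₂) σ₁ ∧ IsFaceOf (σ₁ ∩ σ₂) σ₂

/-- Completeness: the support is everything. -/
def FanComplete {M : Type*} (F : Set (Set M)) : Prop := ⋃₀ F = Set.univ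

/-- Strong symmetry: complete, and the support of the codimension-one cones is a
finite union of hyperplanes. -/
def SSymm {M : Type*} [AddCommGroup M] [Module ℝ M] (F : Set (Set M)) : Prop :=
  FanComplete F ∧ ∃ Hs : Finset (Set M), (∀ h ∈ Hs, IsHyp h) ∧
    ⋃₀ {τ ∈ F | spanDim τ = Module.finrank ℝ M - 1} = ⋃₀ ↑Hs

/-- Central symmetry. -/
def CSymm {M : Type*} [AddCommGroup M] (F : Set (Set M)) : Prop := ∀ σ ∈ F, -σ ∈ F

/-- `b` is a ℤ-basis of the subgroup `L` of `ℝ^r`. -/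
def IsZBasis {r d : ℕ} (L : AddSubgroup (Vr r)) (b : Fin d → Vr r) : Prop :=
  LinearIndependent ℝ b ∧ AddSubgroup.closure (Set.range b) = L

/-- A (full-rank) lattice in `ℝ^r`. -/
def IsLattice {r : ℕ} (N : AddSubgroup (Vr r)) : Prop :=
  ∃ b : Fin r → Vr r, IsZBasis N b

/-- A cone generated by a part of a ℤ-basis of `L`. -/
def SmoothCone {r : ℕ} (L : AddSubgroup (Vr r)) (σ : Set (Vr r)) : Prop :=
  ∃ (d : ℕ) (b : Fin d → Vr r) (s : Finset (Fin d)),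
    IsZBasis L b ∧ σ = coneGen (s.image b)

/-- Chambers of an arrangement: connected components of the complement. -/
def chambers {r : ℕ} (A : Finset (Set (Vr r))) : Set (Set (Vr r)) :=
  { K | ∃ x ∈ (⋃₀ (A : Set (Set (Vr r))))ᶜ,
      K = connectedComponentIn (⋃₀ (A : Set (Set (Vr r))))ᶜ x }

/-- An open simplicial cone of full dimension. -/
def IsOpenSimplicialCone {r : ℕ} (K : Set (Vr r)) : Prop :=
  ∃ b : Fin r → Vr r, LinearIndependent ℝ b ∧
    K = { x | ∃ c : Fin r → ℝ, (∀ i, 0 < c i) ∧ x = ∑ i, c i • b i }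

def ker0 {r : ℕ} (α : Vr r →ₗ[ℝ] ℝ) : Set (Vr r) := {x | α x = 0}

/-- Walls of a chamber `K`. -/
def walls {r : ℕ} (A : Finset (Set (Vr r))) (K : Set (Vr r)) : Set (Set (Vr r)) :=
  { H | H ∈ A ∧ spanDim (H ∩ closure K) = r - 1 }

/-- The set `B^K` of inward-pointing normals of the walls of `K`. -/
def BK {r : ℕ} (A : Finset (Set (Vr r))) (R : Finset (Vr r →ₗ[ℝ] ℝ)) (K : Set (Vr r)) :
    Finset (Vr r →ₗ[ℝ] ℝ) :=
  R.filter (fun α => ker0 α ∈ walls A K ∧ K ⊆ {x | 0 ≤ α x})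

/-- A crystallographic arrangement `(A, R)`. -/
structure IsCrystArr {r : ℕ} (A : Finset (Set (Vr r))) (R : Finset (Vr r →ₗ[ℝ] ℝ)) : Prop where
  simplicial : ∀ K ∈ chambers A, IsOpenSimplicialCone K
  hyps : (A : Set (Set (Vr r))) = (fun α => ker0 α) '' (R : Set (Vr r →ₗ[ℝ] ℝ))
  nonzero : ∀ α ∈ R, α ≠ 0
  neg_mem : ∀ α ∈ R, -α ∈ R
  reduced : ∀ α ∈ R, ∀ β ∈ R, (∃ c : ℝ, β = c • α) → β = α ∨ β = -α
  integral : ∀ K ∈ chambers A, ∀ β ∈ R,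
    β ∈ Submodule.span ℤ ((BK A R K : Set (Vr r →ₗ[ℝ] ℝ)))

/-- The set of all intersections of closed chambers of `A`. -/
def closedChamberInts {r : ℕ} (A : Finset (Set (Vr r))) : Set (Set (Vr r)) :=
  { σ | ∃ S : Set (Set (Vr r)), S.Nonempty ∧ S ⊆ chambers A ∧ σ = ⋂₀ (closure '' S) }

/-- The lattice dual to `M_R = ∑_{α ∈ R} ℤ α`. -/
def dualLattice {r : ℕ} (R : Finset (Vr r →ₗ[ℝ] ℝ)) : AddSubgroup (Vr r) where
  carrier := { x | ∀ α ∈ R, ∃ k : ℤ, α x = k }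
  zero_mem' := fun α _ => ⟨0, by simp⟩
  add_mem' := by
    intro x y hx hy α hα
    obtain ⟨k, hk⟩ := hx α hα
    obtain ⟨m, hm⟩ := hy α hα
    exact ⟨k + m, by simp [hk, hm]⟩
  neg_mem' := by
    intro x hx α hα
    obtain ⟨k, hk⟩ := hx α hα
    exact ⟨-k, by simp [hk]⟩

/-- The star fan of `δ`, as a collection of cones in the quotient by `E`. -/
def starAt {r : ℕ} (F : Set (Set (Vr r))) (δ : Set (Vr r)) (E : Submodule ℝ (Vr r)) :
    Set (Set (Vr r ⧸ E)) :=
  { τ | ∃ σ ∈ F, δ ⊆ σ ∧ τ = E.mkQ '' σ }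

/-- The positive roots `R_+^K` at the chamber `K`. -/
def RplusF {r : ℕ} (A : Finset (Set (Vr r))) (R : Finset (Vr r →ₗ[ℝ] ℝ)) (K : Set (Vr r)) :
    Finset (Vr r →ₗ[ℝ] ℝ) :=
  R.filter (fun α => α ∈ coneGen (BK A R K))

/-- `ρ^K`, the half-sum of the positive roots at `K`. -/
def rhoK {r : ℕ} (A : Finset (Set (Vr r))) (R : Finset (Vr r →ₗ[ℝ] ℝ)) (K : Set (Vr r)) :
    Vr r →ₗ[ℝ] ℝ :=
  (1/2 : ℝ) • ∑ α ∈ RplusF A R K, α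

end

open scoped Classical Pointwise BigOperators

noncomputable section
namespace Stmt9

variable {M : Type*} [AddCommGroup M] [Module ℝ M]

lemma mem_coneGen {s : Finset M} {v : M} (hv : v ∈ s) : v ∈ coneGen s := by
  refine ⟨fun w => if w = v then 1 else 0, fun w => by dsimp only; split <;> norm_num, ?_⟩
  rw [Finset.sum_congr rfl (g := fun w => if w = v then v else 0)
    (fun w _ => by by_cases h : w = v <;> simp [h]), Finset.sum_ite_eq' s v (fun _ => v), if_pos hv]

lemma coneGen_subset_span (s : Finset M) : coneGen s ⊆ (Submodule.span ℝ (s : Set M) : Set M) := by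
  rintro x ⟨c, _, rfl⟩
  exact Submodule.sum_mem _ fun v hv =>
    Submodule.smul_mem _ _ (Submodule.subset_span hv)

lemma span_coneGen (s : Finset M) :
    Submodule.span ℝ (coneGen s) = Submodule.span ℝ (s : Set M) := by
  refine le_antisymm (Submodule.span_le.2 (coneGen_subset_span s)) (Submodule.span_mono ?_)
  exact fun v hv => mem_coneGen hv

lemma zero_mem_coneGen (s : Finset M) : (0 : M) ∈ coneGen s :=
  ⟨0, fun _ => le_rfl, by simp⟩

lemma convex_coneGen (s : Finset M) : Convex ℝ (coneGen s) := by
  rintro x ⟨c, hc, rfl⟩ y ⟨d, hd, rfl⟩ a b ha hb _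
  refine ⟨fun v => a * c v + b * d v,
    fun v => add_nonneg (mul_nonneg ha (hc v)) (mul_nonneg hb (hd v)), ?_⟩
  simp only [Finset.smul_sum, ← Finset.sum_add_distrib, add_smul, mul_smul]

lemma smul_mem_coneGen {s : Finset M} {x : M} (hx : x ∈ coneGen s) {t : ℝ} (ht : 0 ≤ t) :
    t • x ∈ coneGen s := by
  obtain ⟨c, hc, rfl⟩ := hx
  exact ⟨fun v => t * c v, fun v => mul_nonneg ht (hc v), by
    simp [Finset.smul_sum, mul_smul]⟩

lemma add_mem_coneGen {s : Finset M} {x y : M} (hx : x ∈ coneGen s) (hy : y ∈ coneGen s) :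
    x + y ∈ coneGen s := by
  obtain ⟨c, hc, rfl⟩ := hx
  obtain ⟨d, hd, rfl⟩ := hy
  exact ⟨fun v => c v + d v, fun v => add_nonneg (hc v) (hd v), by
    simp [add_smul, Finset.sum_add_distrib]⟩

lemma sum_smul_mem_coneGen {ι : Type*} {s : Finset M} (t : Finset ι) {f : ι → ℝ} {g : ι → M}
    (hf : ∀ i ∈ t, 0 ≤ f i) (hg : ∀ i ∈ t, g i ∈ coneGen s) :
    ∑ i ∈ t, f i • g i ∈ coneGen s := by
  classical
  induction t using Finset.induction with
  | empty => simpa using zero_mem_coneGen s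
  | insert _ _ hi ih =>
    rw [Finset.sum_insert hi]
    exact add_mem_coneGen
      (smul_mem_coneGen (hg _ (Finset.mem_insert_self _ _)) (hf _ (Finset.mem_insert_self _ _)))
      (ih (fun i h => hf i (Finset.mem_insert_of_mem h)) fun i h => hg i (Finset.mem_insert_of_mem h))

lemma coneGen_mono {s t : Finset M} (h : s ⊆ t) : coneGen s ⊆ coneGen t := by
  rintro x ⟨c, hc, rfl⟩
  have : ∀ v ∈ s, (v:M) ∈ coneGen t := fun v hv => mem_coneGen (h hv)
  exact sum_smul_mem_coneGen s (fun v _ => hc v) this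

end Stmt9
end
namespace Stmt9

variable {r : ℕ}

lemma coneGen_image_basis (B : Module.Basis (Fin r) ℝ (Vr r)) (s : Finset (Fin r)) :
    coneGen (s.image ⇑B) =
      {x | ∀ i, (i ∈ s → 0 ≤ B.coord i x) ∧ (i ∉ s → B.coord i x = 0)} := by
  ext x
  constructor
  · rintro ⟨c, hc, rfl⟩
    rw [Finset.sum_image (fun a _ b _ h => B.injective h)]
    intro i
    have : ∀ j, B.coord i (B j) = if j = i then 1 else 0 := by
      intro j
      simp [Module.Basis.coord_apply, Module.Basis.repr_self, Finsupp.single_apply]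
    have hval : B.coord i (∑ j ∈ s, c (B j) • B j) = if i ∈ s then c (B i) else 0 := by
      rw [map_sum]
      simp only [map_smul, this, smul_eq_mul, mul_ite, mul_one, mul_zero]
      rw [Finset.sum_ite_eq' s i (fun j => c (B j))]
    rw [hval]
    constructor
    · intro hi; rw [if_pos hi]; exact hc _
    · intro hi; rw [if_neg hi]
  · intro hx
    refine ⟨Function.extend ⇑B (fun i => B.repr x i) 0, ?_, ?_⟩
    · intro v
      rcases em (∃ i, B i = v) with ⟨i, rfl⟩ | hv
      · rw [B.injective.extend_apply]
        rcases em (i ∈ s) with hi | hi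
        · exact (hx i).1 hi
        · rw [show B.repr x i = B.coord i x from rfl, (hx i).2 hi]
      · rw [Function.extend_apply' _ _ _ hv]; rfl
    · rw [Finset.sum_image (fun a _ b _ h => B.injective h)]
      simp only [B.injective.extend_apply]
      rw [Finset.sum_subset (Finset.subset_univ s)]
      · exact (B.sum_repr x).symm
      · intro i _ hi
        rw [show B.repr x i = B.coord i x from rfl, (hx i).2 hi, zero_smul]

lemma coneGen_univ_basis (B : Module.Basis (Fin r) ℝ (Vr r)) :
    coneGen (Finset.univ.image ⇑B) = {x | ∀ i, 0 ≤ B.coord i x} := by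
  rw [coneGen_image_basis]
  ext x
  simp

lemma continuous_coord (B : Module.Basis (Fin r) ℝ (Vr r)) (i : Fin r) :
    Continuous (B.coord i) :=
  LinearMap.continuous_of_finiteDimensional _

lemma isClosed_coneGen_univ (B : Module.Basis (Fin r) ℝ (Vr r)) :
    IsClosed (coneGen (Finset.univ.image ⇑B)) := by
  rw [coneGen_univ_basis]
  have : {x : Vr r | ∀ i, 0 ≤ B.coord i x} = ⋂ i, (B.coord i) ⁻¹' (Set.Ici 0) := by
    ext x; simp [Set.mem_iInter]
  rw [this]
  exact isClosed_iInter fun i => (isClosed_Ici).preimage (continuous_coord B i)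

lemma interior_coneGen_univ (B : Module.Basis (Fin r) ℝ (Vr r)) :
    interior (coneGen (Finset.univ.image ⇑B)) = {x | ∀ i, 0 < B.coord i x} := by
  rw [coneGen_univ_basis]
  apply subset_antisymm
  · intro x hx i
    have hxmem : x ∈ {x : Vr r | ∀ i, 0 ≤ B.coord i x} := interior_subset hx
    rcases lt_or_eq_of_le (hxmem i) with h | h
    · exact h
    · exfalso
      obtain ⟨ε, hε, hball⟩ := Metric.isOpen_iff.1 isOpen_interior x hx
      have hBi : B i ≠ 0 := B.ne_zero i
      have hnorm : ‖B i‖ ≠ 0 := norm_ne_zero_iff.2 hBi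
      set δ := ε / (2 * ‖B i‖) with hδ
      have hδpos : 0 < δ := by positivity
      have hmem : x - δ • B i ∈ Metric.ball x ε := by
        rw [Metric.mem_ball, dist_eq_norm]
        have : x - δ • B i - x = -(δ • B i) := by abel
        rw [this, norm_neg, norm_smul, Real.norm_eq_abs, abs_of_pos hδpos, hδ]
        rw [div_mul_eq_mul_div, mul_comm (2:ℝ) ‖B i‖, ← div_div, mul_div_assoc,
          div_self hnorm, mul_one]
        linarith
      have : x - δ • B i ∈ {x : Vr r | ∀ i, 0 ≤ B.coord i x} :=
        interior_subset (hball hmem)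
      have h2 := this i
      rw [map_sub, map_smul, ← h, smul_eq_mul] at h2
      have : B.coord i (B i) = 1 := by simp [Module.Basis.coord_apply]
      rw [this] at h2
      simp only [zero_sub, mul_one] at h2
      linarith
  · intro x hx
    have hopen : IsOpen {x : Vr r | ∀ i, 0 < B.coord i x} := by
      have : {x : Vr r | ∀ i, 0 < B.coord i x} = ⋂ i, (B.coord i) ⁻¹' (Set.Ioi 0) := by
        ext y; simp [Set.mem_iInter]
      rw [this]
      exact isOpen_iInter_of_finite fun i => (isOpen_Ioi).preimage (continuous_coord B i)
    exact interior_maximal (fun y (hy : ∀ i, 0 < B.coord i y) i => le_of_lt (hy i)) hopen hx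

lemma closure_interior_coneGen_univ (B : Module.Basis (Fin r) ℝ (Vr r)) :
    closure (interior (coneGen (Finset.univ.image ⇑B))) = coneGen (Finset.univ.image ⇑B) := by
  apply subset_antisymm
  · nth_rewrite 2 [← (isClosed_coneGen_univ B).closure_eq]
    exact closure_mono interior_subset
  · intro x hx
    rw [coneGen_univ_basis] at hx
    set e : Vr r := ∑ j, B j with he
    have hce : ∀ i, B.coord i e = 1 := by
      intro i
      rw [he, map_sum]
      have : ∀ j, B.coord i (B j) = if j = i then 1 else 0 := by
        intro j; simp [Module.Basis.coord_apply, Module.Basis.repr_self, Finsupp.single_apply]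
      simp [this]
    have hseq : Filter.Tendsto (fun n : ℕ => x + (1 / (n + 1) : ℝ) • e)
        Filter.atTop (nhds x) := by
      have h1 : Filter.Tendsto (fun n : ℕ => (1 / (n + 1) : ℝ)) Filter.atTop (nhds 0) :=
        tendsto_one_div_add_atTop_nhds_zero_nat
      have h2 : Filter.Tendsto (fun n : ℕ => (1 / (n + 1) : ℝ) • e)
          Filter.atTop (nhds ((0:ℝ) • e)) := h1.smul tendsto_const_nhds
      rw [zero_smul] at h2
      simpa using (tendsto_const_nhds (x := x)).add h2
    refine mem_closure_of_tendsto hseq (Filter.Eventually.of_forall fun n => ?_)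
    rw [interior_coneGen_univ]
    intro i
    have hpos : (0:ℝ) < 1 / (n + 1) := by positivity
    rw [map_add, map_smul, hce, smul_eq_mul, mul_one]
    have := hx i
    linarith

end Stmt9
namespace Stmt9

variable {r : ℕ}

lemma span_addClosure (X : Set (Vr r)) :
    Submodule.span ℝ ((AddSubgroup.closure X : AddSubgroup (Vr r)) : Set (Vr r)) =
      Submodule.span ℝ X := by
  apply le_antisymm
  · rw [Submodule.span_le]
    intro x hx
    have : AddSubgroup.closure X ≤ (Submodule.span ℝ X).toAddSubgroup :=
      (AddSubgroup.closure_le _).2 Submodule.subset_span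
    exact this hx
  · exact Submodule.span_mono (AddSubgroup.subset_closure)

lemma span_of_zbasis {d : ℕ} {N : AddSubgroup (Vr r)} {b : Fin d → Vr r}
    (hb : IsZBasis N b) :
    Submodule.span ℝ ((N : Set (Vr r))) = Submodule.span ℝ (Set.range b) := by
  rw [← hb.2, span_addClosure]

lemma zbasis_card {d : ℕ} {N : AddSubgroup (Vr r)} {b : Fin d → Vr r}
    (hb : IsZBasis N b) (hN : IsLattice N) : d = r := by
  obtain ⟨b₀, hb₀⟩ := hN
  have h1 : Module.finrank ℝ (Submodule.span ℝ (Set.range b)) = d := by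
    rw [finrank_span_eq_card hb.1, Fintype.card_fin]
  have h2 : Module.finrank ℝ (Submodule.span ℝ (Set.range b₀)) = r := by
    rw [finrank_span_eq_card hb₀.1, Fintype.card_fin]
  rw [← span_of_zbasis hb] at h1
  rw [← span_of_zbasis hb₀] at h2
  rw [h1] at h2; exact h2.symm ▸ rfl

lemma zbasis_toBasis {N : AddSubgroup (Vr r)} {b : Fin r → Vr r}
    (hb : IsZBasis N b) (hr : 0 < r) :
    ∃ B : Module.Basis (Fin r) ℝ (Vr r), ⇑B = b := by
  have : Nonempty (Fin r) := ⟨⟨0, hr⟩⟩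
  refine ⟨basisOfLinearIndependentOfCardEqFinrank hb.1 ?_, by
    rw [coe_basisOfLinearIndependentOfCardEqFinrank]⟩
  simp [Module.finrank_pi]

lemma mem_N_of_range {N : AddSubgroup (Vr r)} {d : ℕ} {b : Fin d → Vr r}
    (hb : IsZBasis N b) (i : Fin d) : b i ∈ N := by
  rw [← hb.2]
  exact AddSubgroup.subset_closure (Set.mem_range_self i)

lemma coord_int_of_mem {N : AddSubgroup (Vr r)} {B : Module.Basis (Fin r) ℝ (Vr r)}
    (hb : IsZBasis N ⇑B) {x : Vr r} (hx : x ∈ N) (i : Fin r) :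
    ∃ k : ℤ, B.coord i x = k := by
  rw [← hb.2] at hx
  induction hx using AddSubgroup.closure_induction with
  | mem x hx =>
    obtain ⟨j, rfl⟩ := hx
    rcases em (j = i) with rfl | hji
    · exact ⟨1, by simp [Module.Basis.coord_apply, Module.Basis.repr_self]⟩
    · exact ⟨0, by simp [Module.Basis.coord_apply, Module.Basis.repr_self, Finsupp.single_apply, hji]⟩
  | zero => exact ⟨0, by simp⟩
  | add x y _ _ hx hy =>
    obtain ⟨k, hk⟩ := hx; obtain ⟨m, hm⟩ := hy
    exact ⟨k + m, by rw [map_add, hk, hm]; push_cast; ring⟩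
  | neg x _ hx =>
    obtain ⟨k, hk⟩ := hx
    exact ⟨-k, by rw [map_neg, hk]; push_cast; ring⟩

/-- The span-dimension of a cone generated by part of a basis. -/
lemma spanDim_coneGen_image (B : Module.Basis (Fin r) ℝ (Vr r)) (s : Finset (Fin r)) :
    spanDim (coneGen (s.image ⇑B)) = s.card := by
  rw [spanDim, span_coneGen]
  have h1 : ((s.image ⇑B : Finset (Vr r)) : Set (Vr r)) = Set.range (fun k : {x // x ∈ s} => B k) := by
    ext v
    simp only [Finset.coe_image, Set.mem_image, Finset.mem_coe, Set.mem_range]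
    constructor
    · rintro ⟨i, hi, rfl⟩; exact ⟨⟨i, hi⟩, rfl⟩
    · rintro ⟨⟨i, hi⟩, rfl⟩; exact ⟨i, hi, rfl⟩
  rw [h1]
  have := finrank_span_eq_card (R := ℝ) (b := (⇑B ∘ Subtype.val : {x // x ∈ s} → Vr r))
    (B.linearIndependent.comp _ Subtype.val_injective)
  rw [show (Set.range fun k : {x // x ∈ s} => B ↑k) = Set.range (⇑B ∘ Subtype.val) from rfl,
    this, Fintype.card_coe]

end Stmt9
namespace Stmt9

variable {r : ℕ}

lemma exists_avoid (l : List (Submodule ℝ (Vr r))) (hl : ∀ V ∈ l, V ≠ ⊤)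
    {U : Set (Vr r)} (hU : IsOpen U) (hne : U.Nonempty) :
    ∃ x ∈ U, ∀ V ∈ l, x ∉ V := by
  induction l generalizing U with
  | nil =>
    obtain ⟨x, hx⟩ := hne
    exact ⟨x, hx, by simp⟩
  | cons V l ih =>
    have hVne : V ≠ ⊤ := hl V List.mem_cons_self
    have hVc : IsClosed (V : Set (Vr r)) := Submodule.closed_of_finiteDimensional V
    have hU' : IsOpen (U \ (V : Set (Vr r))) := hU.sdiff hVc
    have hne' : (U \ (V : Set (Vr r))).Nonempty := by
      by_contra h
      rw [Set.not_nonempty_iff_eq_empty, Set.diff_eq_empty] at h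
      exact hVne (Submodule.eq_top_of_nonempty_interior' V
        ⟨hne.choose, interior_maximal h hU hne.choose_spec⟩)
    obtain ⟨x, hx, hxl⟩ := ih (fun W hW => hl W (List.mem_cons_of_mem _ hW)) hU' hne'
    refine ⟨x, hx.1, ?_⟩
    intro W hW
    rcases List.mem_cons.1 hW with rfl | hW
    · exact hx.2
    · exact hxl W hW

/-- Structure of a smooth cone in `F`. -/
lemma smooth_struct {N : AddSubgroup (Vr r)} (hN : IsLattice N) (hr : 0 < r)
    {σ : Set (Vr r)} (hσ : SmoothCone N σ) :
    ∃ (B : Module.Basis (Fin r) ℝ (Vr r)) (s : Finset (Fin r)),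
      IsZBasis N ⇑B ∧ σ = coneGen (s.image ⇑B) ∧ s.card = spanDim σ := by
  obtain ⟨d, b, s, hzb, hcg⟩ := hσ
  obtain rfl : d = r := zbasis_card hzb hN
  obtain ⟨B, hB⟩ := zbasis_toBasis hzb hr
  subst hB
  exact ⟨B, s, hzb, hcg, by rw [hcg, spanDim_coneGen_image]⟩

lemma spanDim_le (σ : Set (Vr r)) : spanDim σ ≤ r := by
  rw [spanDim]
  have := Submodule.finrank_le (Submodule.span ℝ σ)
  simpa [Module.finrank_pi] using this

lemma span_ne_top_of_spanDim_lt {σ : Set (Vr r)} (h : spanDim σ < r) :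
    Submodule.span ℝ σ ≠ ⊤ := by
  intro htop
  rw [spanDim, htop, finrank_top, Module.finrank_pi, Fintype.card_fin] at h
  exact lt_irrefl _ h

end Stmt9
namespace Stmt9

variable {r : ℕ}

lemma spanDim_mono {σ τ : Set (Vr r)} (h : σ ⊆ τ) : spanDim σ ≤ spanDim τ :=
  Submodule.finrank_mono (Submodule.span_mono h)

lemma apply_coneGen_eq_zero {s : Finset (Vr r)} (m : Vr r →ₗ[ℝ] ℝ)
    (hm : ∀ v ∈ s, m v = 0) : ∀ x ∈ coneGen s, m x = 0 := by
  rintro x ⟨c, hc, rfl⟩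
  rw [map_sum]
  exact Finset.sum_eq_zero fun v hv => by rw [map_smul, hm v hv, smul_zero]

/-- If `y` is in the interior of `σ₁` and in `σ₂`, both cones of the fan,
then `σ₁ ⊆ σ₂`. -/
lemma interior_absorb {N : AddSubgroup (Vr r)} {F : Set (Set (Vr r))} (hfan : IsFan N F)
    {σ₁ σ₂ : Set (Vr r)} (h1 : σ₁ ∈ F) (h2 : σ₂ ∈ F) {y : Vr r}
    (hy1 : y ∈ interior σ₁) (hy2 : y ∈ σ₂) : σ₁ ⊆ σ₂ := by
  obtain ⟨m, hm, heq⟩ := (hfan.inter σ₁ h1 σ₂ h2).1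
  have hy : y ∈ σ₁ ∩ σ₂ := ⟨interior_subset hy1, hy2⟩
  have hmy : m y = 0 := by
    rw [heq] at hy; exact hy.2
  have hm0 : ∀ v, m v = 0 := by
    intro v
    obtain ⟨ε, hε, hball⟩ := Metric.isOpen_iff.1 isOpen_interior y hy1
    set t := ε / (2 * (‖v‖ + 1)) with ht
    have htpos : 0 < t := by positivity
    have hmemball : ∀ (u : Vr r), ‖u‖ ≤ ‖v‖ → y + t • u ∈ σ₁ := by
      intro u hu
      apply interior_subset
      apply hball
      rw [Metric.mem_ball, dist_eq_norm]
      have : y + t • u - y = t • u := by abel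
      rw [this, norm_smul, Real.norm_eq_abs, abs_of_pos htpos, ht]
      have h1 : ‖u‖ < ‖v‖ + 1 := lt_of_le_of_lt hu (by linarith)
      have h2 : (0:ℝ) < ‖v‖ + 1 := by positivity
      calc ε / (2 * (‖v‖ + 1)) * ‖u‖ ≤ ε / (2 * (‖v‖ + 1)) * (‖v‖ + 1) := by
            apply mul_le_mul_of_nonneg_left (le_of_lt h1) (le_of_lt (by positivity))
        _ = ε / 2 := by field_simp
        _ < ε := by linarith
    have hp := hm _ (hmemball v le_rfl)
    have hn := hm _ (hmemball (-v) (by rw [norm_neg]))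
    rw [map_add, map_smul, hmy, smul_eq_mul, zero_add] at hp hn
    rw [map_neg, mul_neg] at hn
    nlinarith
  have : σ₁ ∩ σ₂ = σ₁ := by
    rw [heq]
    ext z; simp only [Set.mem_inter_iff, Set.mem_setOf_eq]
    exact ⟨fun h => h.1, fun h => ⟨h, hm0 z⟩⟩
  rw [← this]; exact Set.inter_subset_right

lemma coord_genPt (B : Module.Basis (Fin r) ℝ (Vr r)) (s : Finset (Fin r)) (t : Fin r → ℝ)
    (j : Fin r) : B.coord j (∑ i ∈ s, t i • B i) = if j ∈ s then t j else 0 := by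
  rw [map_sum]
  have : ∀ i j : Fin r, B.coord j (B i) = if i = j then 1 else 0 := by
    intro i j; simp [Module.Basis.coord_apply, Module.Basis.repr_self, Finsupp.single_apply]
  simp only [map_smul, this, smul_eq_mul, mul_ite, mul_one, mul_zero]
  rw [Finset.sum_ite_eq' s j t]

lemma genPt_mem (B : Module.Basis (Fin r) ℝ (Vr r)) (s : Finset (Fin r)) {t : Fin r → ℝ}
    (ht : ∀ i ∈ s, 0 ≤ t i) : (∑ i ∈ s, t i • B i) ∈ coneGen (s.image ⇑B) := by
  rw [coneGen_image_basis]
  intro i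
  rw [coord_genPt]
  constructor
  · intro hi; rw [if_pos hi]; exact ht i hi
  · intro hi; rw [if_neg hi]

/-- A nonnegative functional on a cone vanishing at an interior-type generic point
vanishes on the whole cone. -/
lemma face_degenerate (B : Module.Basis (Fin r) ℝ (Vr r)) (s : Finset (Fin r))
    {m : Vr r →ₗ[ℝ] ℝ} (hm : ∀ x ∈ coneGen (s.image ⇑B), 0 ≤ m x)
    {t : Fin r → ℝ} (ht : ∀ i ∈ s, 0 < t i) (h0 : m (∑ i ∈ s, t i • B i) = 0) :
    ∀ x ∈ coneGen (s.image ⇑B), m x = 0 := by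
  have hgen : ∀ k ∈ s, m (B k) = 0 := by
    have hsum : ∑ i ∈ s, t i * m (B i) = 0 := by
      rw [← h0, map_sum]; simp [map_smul]
    have hnn : ∀ i ∈ s, 0 ≤ t i * m (B i) := fun i hi =>
      mul_nonneg (le_of_lt (ht i hi))
        (hm _ (mem_coneGen (Finset.mem_image_of_mem _ hi)))
    intro k hk
    have := (Finset.sum_eq_zero_iff_of_nonneg hnn).1 hsum k hk
    rcases mul_eq_zero.1 this with h | h
    · exact absurd h (ne_of_gt (ht k hk))
    · exact h
  apply apply_coneGen_eq_zero
  intro v hv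
  obtain ⟨k, hk, rfl⟩ := Finset.mem_image.1 hv
  exact hgen k hk

/-- A face of a cone containing a strictly positive generic point is everything. -/
lemma subset_of_face_genPt {τ σ' : Set (Vr r)} (B : Module.Basis (Fin r) ℝ (Vr r))
    (s : Finset (Fin r)) (hτ : τ = coneGen (s.image ⇑B))
    (hface : IsFaceOf (τ ∩ σ') τ) {t : Fin r → ℝ} (ht : ∀ i ∈ s, 0 < t i)
    (hmem : (∑ i ∈ s, t i • B i) ∈ τ ∩ σ') : τ ⊆ σ' := by
  obtain ⟨m, hm, heq⟩ := hface
  have h0 : m (∑ i ∈ s, t i • B i) = 0 := by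
    have := hmem; rw [heq] at this; exact this.2
  subst hτ
  have hall := face_degenerate B s hm ht h0
  intro x hx
  have : x ∈ coneGen (s.image ⇑B) ∩ σ' := by
    rw [heq]; exact ⟨hx, hall x hx⟩
  exact this.2

end Stmt9
namespace Stmt9

variable {r : ℕ}

lemma finrank_ker {f : Vr r →ₗ[ℝ] ℝ} (hf : f ≠ 0) :
    Module.finrank ℝ (LinearMap.ker f) = r - 1 := by
  have hr : Module.finrank ℝ (Vr r) = r := by simp [Module.finrank_pi]
  have hrange : LinearMap.range f = ⊤ := by
    obtain ⟨v, hv⟩ : ∃ v, f v ≠ 0 := by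
      by_contra h
      push_neg at h
      exact hf (LinearMap.ext fun v => by rw [h v]; rfl)
    rw [eq_top_iff]
    intro c _
    exact ⟨(c / f v) • v, by rw [map_smul, smul_eq_mul, div_mul_cancel₀ _ hv]⟩
  have := LinearMap.finrank_range_add_finrank_ker f
  rw [hrange, finrank_top, hr] at this
  have h1 : Module.finrank ℝ ℝ = 1 := Module.finrank_self ℝ
  omega

lemma span_eq_ker {f : Vr r →ₗ[ℝ] ℝ} (hf : f ≠ 0) {P : Submodule ℝ (Vr r)}
    (hle : P ≤ LinearMap.ker f) (hfr : Module.finrank ℝ P = r - 1) :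
    P = LinearMap.ker f :=
  Submodule.eq_of_le_of_finrank_le hle (by rw [finrank_ker hf, hfr])

lemma coord_apply_self (B : Module.Basis (Fin r) ℝ (Vr r)) (i : Fin r) : B.coord i (B i) = 1 := by
  simp [Module.Basis.coord_apply, Module.Basis.repr_self]

lemma coord_apply_ne (B : Module.Basis (Fin r) ℝ (Vr r)) {i j : Fin r} (h : j ≠ i) :
    B.coord i (B j) = 0 := by
  simp [Module.Basis.coord_apply, Module.Basis.repr_self, Finsupp.single_apply, h]

lemma coord_ne_zero (B : Module.Basis (Fin r) ℝ (Vr r)) (i : Fin r) : B.coord i ≠ 0 := by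
  intro h
  have h1 : B.coord i (B i) = 1 := coord_apply_self B i
  rw [h] at h1
  simp at h1

lemma mem_coneGen_univ_iff (B : Module.Basis (Fin r) ℝ (Vr r)) {x : Vr r} :
    x ∈ coneGen (Finset.univ.image ⇑B) ↔ ∀ i, 0 ≤ B.coord i x := by
  rw [coneGen_univ_basis]; rfl

lemma mem_coneGen_erase_iff (B : Module.Basis (Fin r) ℝ (Vr r)) (i : Fin r) {x : Vr r} :
    x ∈ coneGen ((Finset.univ.erase i).image ⇑B) ↔
      (∀ j, 0 ≤ B.coord j x) ∧ B.coord i x = 0 := by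
  rw [coneGen_image_basis]
  constructor
  · intro h
    have hi : B.coord i x = 0 := (h i).2 (fun hc => (Finset.mem_erase.1 hc).1 rfl)
    refine ⟨fun j => ?_, hi⟩
    rcases em (j = i) with rfl | hne
    · rw [hi]
    · exact (h j).1 (Finset.mem_erase.2 ⟨hne, Finset.mem_univ j⟩)
  · rintro ⟨h1, h2⟩ j
    refine ⟨fun _ => h1 j, fun hj => ?_⟩
    have : j = i := by
      by_contra hne
      exact hj (Finset.mem_erase.2 ⟨hne, Finset.mem_univ j⟩)
    rw [this]; exact h2

lemma facet_eq (B : Module.Basis (Fin r) ℝ (Vr r)) (i : Fin r) :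
    coneGen (Finset.univ.image ⇑B) ∩ {x | B.coord i x = 0} =
      coneGen ((Finset.univ.erase i).image ⇑B) := by
  ext x
  rw [Set.mem_inter_iff, mem_coneGen_univ_iff, mem_coneGen_erase_iff]
  exact ⟨fun ⟨h1, h2⟩ => ⟨h1, h2⟩, fun ⟨h1, h2⟩ => ⟨h1, h2⟩⟩

lemma facet_mem_F {N : AddSubgroup (Vr r)} {F : Set (Set (Vr r))} (hfan : IsFan N F)
    {B : Module.Basis (Fin r) ℝ (Vr r)} (hσ : coneGen (Finset.univ.image ⇑B) ∈ F) (i : Fin r) :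
    coneGen ((Finset.univ.erase i).image ⇑B) ∈ F := by
  apply hfan.faces _ hσ
  exact ⟨B.coord i, fun x hx => ((mem_coneGen_univ_iff B).1 hx) i, (facet_eq B i).symm⟩

lemma spanDim_facet (B : Module.Basis (Fin r) ℝ (Vr r)) (i : Fin r) :
    spanDim (coneGen ((Finset.univ.erase i).image ⇑B)) = r - 1 := by
  rw [spanDim_coneGen_image, Finset.card_erase_of_mem (Finset.mem_univ i),
    Finset.card_univ, Fintype.card_fin]

lemma span_facet_eq_ker (B : Module.Basis (Fin r) ℝ (Vr r)) (i : Fin r) :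
    Submodule.span ℝ (coneGen ((Finset.univ.erase i).image ⇑B)) =
      LinearMap.ker (B.coord i) := by
  apply span_eq_ker (coord_ne_zero B i)
  · rw [span_coneGen, Submodule.span_le]
    intro v hv
    obtain ⟨j, hj, rfl⟩ := Finset.mem_image.1 (by exact_mod_cast hv)
    exact coord_apply_ne B (Finset.mem_erase.1 hj).1
  · exact spanDim_facet B i

lemma proportional_of_ker_sub {α g : Vr r →ₗ[ℝ] ℝ} {w : Vr r} (hw : α w = 1)
    (h : ∀ v, α v = 0 → g v = 0) : g = g w • α := by
  apply LinearMap.ext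
  intro v
  have hker : α (v - (α v) • w) = 0 := by
    rw [map_sub, map_smul, hw, smul_eq_mul, mul_one, sub_self]
  have := h _ hker
  rw [map_sub, map_smul, sub_eq_zero] at this
  rw [this]
  simp [mul_comm]

end Stmt9
namespace Stmt9

variable {r : ℕ}

lemma isOpen_pos_orthant : IsOpen {t : Fin r → ℝ | ∀ i, 0 < t i} := by
  have : {t : Fin r → ℝ | ∀ i, 0 < t i} = ⋂ i, (fun t : Fin r → ℝ => t i) ⁻¹' (Set.Ioi 0) := by
    ext t; simp
  rw [this]
  exact isOpen_iInter_of_finite fun i => (isOpen_Ioi).preimage (continuous_apply i)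

lemma finrank_Vr : Module.finrank ℝ (Vr r) = r := by simp [Module.finrank_pi]

/-- The fan hypotheses are contradictory for `r = 0`. -/
lemma r_pos {N : AddSubgroup (Vr r)} {F : Set (Set (Vr r))}
    (hfan : IsFan N F) (hss : SSymm F) : 0 < r := by
  by_contra h
  push_neg at h
  interval_cases r
  obtain ⟨Hs, hH, hske⟩ := hss.2
  obtain ⟨σ₀, hσ₀⟩ := hfan.nonempty
  have h0 : (0 : Vr 0) ∈ σ₀ := by
    obtain ⟨s, _, rfl, _⟩ := hfan.cones σ₀ hσ₀
    exact zero_mem_coneGen s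
  have hdim : spanDim σ₀ = Module.finrank ℝ (Vr 0) - 1 := by
    have h1 := spanDim_le σ₀
    have h2 : Module.finrank ℝ (Vr 0) = 0 := finrank_Vr
    omega
  have : (0 : Vr 0) ∈ ⋃₀ ↑Hs := by
    rw [← hske]
    exact ⟨σ₀, ⟨hσ₀, hdim⟩, h0⟩
  obtain ⟨h', hh', _⟩ := this
  obtain ⟨f, hf, _⟩ := hH h' hh'
  apply hf
  apply LinearMap.ext
  intro v
  have hv0 : v = 0 := Subsingleton.elim v 0
  rw [hv0, map_zero]
  exact (LinearMap.zero_apply _).symm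

/-- The parameterization of a coordinate cone. -/
noncomputable def genMap (B : Module.Basis (Fin r) ℝ (Vr r)) (s : Finset (Fin r)) : (Fin r → ℝ) →ₗ[ℝ] Vr r where
  toFun := fun t => ∑ i ∈ s, t i • B i
  map_add' := by intro a b; simp [add_smul, Finset.sum_add_distrib]
  map_smul' := by intro c a; simp [Finset.smul_sum, smul_smul]

/-- Every point is in a full-dimensional cone. -/
lemma exists_full_mem {N : AddSubgroup (Vr r)} {F : Set (Set (Vr r))}
    (hN : IsLattice N) (hfan : IsFan N F) (hss : SSymm F)
    (hsmooth : ∀ σ ∈ F, SmoothCone N σ) (x : Vr r) :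
    ∃ σ ∈ F, spanDim σ = r ∧ x ∈ σ := by
  have hr : 0 < r := r_pos hfan hss
  by_contra hcon
  push_neg at hcon
  -- The union of full-dimensional cones is closed
  set C : Set (Vr r) := ⋃₀ {σ ∈ F | spanDim σ = r} with hC
  have hCclosed : IsClosed C := by
    rw [hC, Set.sUnion_eq_biUnion]
    apply Set.Finite.isClosed_biUnion (hfan.finite.subset (Set.sep_subset _ _))
    rintro σ ⟨hσF, hσdim⟩
    obtain ⟨B, s, hzb, rfl, hcard⟩ := smooth_struct hN hr (hsmooth σ hσF)
    have : s = Finset.univ := Finset.eq_univ_of_card s (by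
      rw [hcard, hσdim, Fintype.card_fin])
    rw [this]
    exact isClosed_coneGen_univ B
  have hx : x ∉ C := by
    rintro ⟨σ, ⟨hσF, hσdim⟩, hxσ⟩
    exact hcon σ hσF hσdim hxσ
  -- avoid the spans of lower-dimensional cones
  have hfin : Set.Finite ((fun σ => Submodule.span ℝ σ) '' {σ ∈ F | spanDim σ ≠ r}) :=
    (hfan.finite.subset (Set.sep_subset _ _)).image _
  obtain ⟨y, hyU, hy⟩ := exists_avoid hfin.toFinset.toList
    (fun V hV => by
      rw [Finset.mem_toList, Set.Finite.mem_toFinset] at hV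
      obtain ⟨σ, ⟨hσF, hσdim⟩, rfl⟩ := hV
      exact span_ne_top_of_spanDim_lt (lt_of_le_of_ne (spanDim_le σ) hσdim))
    hCclosed.isOpen_compl ⟨x, hx⟩
  have hyuniv : y ∈ ⋃₀ F := by rw [hss.1]; trivial
  obtain ⟨σ₀, hσ₀F, hyσ₀⟩ := hyuniv
  rcases em (spanDim σ₀ = r) with hdim | hdim
  · exact hyU ⟨σ₀, ⟨hσ₀F, hdim⟩, hyσ₀⟩
  · refine hy (Submodule.span ℝ σ₀) ?_ (Submodule.subset_span hyσ₀)
    rw [Finset.mem_toList, Set.Finite.mem_toFinset]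
    exact ⟨σ₀, ⟨hσ₀F, hdim⟩, rfl⟩

/-- The span of a codimension-one cone is contained in the skeleton. -/
lemma span_codim1_subset_skeleton {N : AddSubgroup (Vr r)} {F : Set (Set (Vr r))}
    (hN : IsLattice N) (hfan : IsFan N F) (hss : SSymm F)
    (hsmooth : ∀ σ ∈ F, SmoothCone N σ) {τ : Set (Vr r)} (hτF : τ ∈ F)
    (hτdim : spanDim τ = r - 1) :
    ((Submodule.span ℝ τ : Submodule ℝ (Vr r)) : Set (Vr r)) ⊆
      ⋃₀ {τ' ∈ F | spanDim τ' = r - 1} := by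
  have hr : 0 < r := r_pos hfan hss
  obtain ⟨Hs, hH, hske⟩ := hss.2
  have hskel : ⋃₀ {τ' ∈ F | spanDim τ' = r - 1} = ⋃₀ ↑Hs := by
    rw [← hske]
    apply congrArg
    ext τ'
    simp only [Set.mem_setOf_eq, finrank_Vr]
  obtain ⟨B, s, hzb, hτeq, hcard⟩ := smooth_struct hN hr (hsmooth τ hτF)
  rw [hτdim] at hcard
  -- Key claim : the span of τ is one of the hyperplanes.
  have key : ∃ h ∈ Hs, ((Submodule.span ℝ τ : Submodule ℝ (Vr r)) : Set (Vr r)) = h := by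
    by_contra hno
    push_neg at hno
    -- every hyperplane misses some generator
    have hker : ∀ h ∈ Hs, ¬ ((fun k => B k) '' s ⊆ h) := by
      intro h hh hsub
      obtain ⟨f, hf, hfeq⟩ := hH h hh
      have hle : Submodule.span ℝ τ ≤ LinearMap.ker f := by
        rw [hτeq, span_coneGen, Submodule.span_le]
        intro v hv
        obtain ⟨k, hk, rfl⟩ := Finset.mem_image.1 (by exact_mod_cast hv)
        have : B k ∈ h := hsub ⟨k, hk, rfl⟩
        rw [hfeq] at this
        exact this
      have heq : Submodule.span ℝ τ = LinearMap.ker f :=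
        span_eq_ker hf hle (by rw [← spanDim]; exact hτdim)
      refine hno h hh ?_
      rw [heq, hfeq]
      rfl
    -- avoid the pullbacks of the hyperplanes
    have hVne : ∀ h ∈ Hs, Submodule.comap (genMap B s) (Submodule.span ℝ h) ≠ ⊤ := by
      intro h hh htop
      apply hker h hh
      rintro v ⟨k, hk, rfl⟩
      have hmem : (Pi.single k 1 : Fin r → ℝ) ∈
          Submodule.comap (genMap B s) (Submodule.span ℝ h) := by rw [htop]; trivial
      have hgm : genMap B s (Pi.single k (1:ℝ)) = B k := by
        simp only [genMap, LinearMap.coe_mk, AddHom.coe_mk]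
        rw [Finset.sum_eq_single k]
        · simp
        · intro b hb hbk
          rw [Pi.single_eq_of_ne hbk, zero_smul]
        · intro hks; exact absurd hk hks
      rw [Submodule.mem_comap, hgm] at hmem
      -- B k ∈ span ℝ h; we need B k ∈ h
      obtain ⟨f, hf, hfeq⟩ := hH h hh
      have hsp : Submodule.span ℝ h = LinearMap.ker f := by
        rw [hfeq]
        show Submodule.span ℝ ((LinearMap.ker f : Submodule ℝ (Vr r)) : Set (Vr r)) = _
        exact Submodule.span_eq _
      rw [hsp] at hmem
      rw [hfeq]
      exact hmem
    obtain ⟨t, htpos, ht⟩ := exists_avoid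
      ((Hs.image (fun h => Submodule.comap (genMap B s) (Submodule.span ℝ h))).toList)
      (fun V hV => by
        rw [Finset.mem_toList, Finset.mem_image] at hV
        obtain ⟨h, hh, rfl⟩ := hV
        exact hVne h hh)
      isOpen_pos_orthant ⟨fun _ => 1, fun i => one_pos⟩
    have hx₀τ : (∑ i ∈ s, t i • B i) ∈ τ := by
      rw [hτeq]
      exact genPt_mem B s (fun i hi => le_of_lt (htpos i))
    have hx₀sk : (∑ i ∈ s, t i • B i) ∈ ⋃₀ ↑Hs := by
      rw [← hskel]
      exact ⟨τ, ⟨hτF, hτdim⟩, hx₀τ⟩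
    obtain ⟨h, hh, hx₀h⟩ := hx₀sk
    refine ht (Submodule.comap (genMap B s) (Submodule.span ℝ h)) ?_ ?_
    · rw [Finset.mem_toList, Finset.mem_image]
      exact ⟨h, hh, rfl⟩
    · rw [Submodule.mem_comap]
      exact Submodule.subset_span hx₀h
  obtain ⟨h, hh, hspan⟩ := key
  rw [hspan, hskel]
  exact Set.subset_sUnion_of_mem hh

end Stmt9
namespace Stmt9

variable {r : ℕ} {N : AddSubgroup (Vr r)} {F : Set (Set (Vr r))} {A : Finset (Set (Vr r))}

/-- Interiors of full-dimensional cones avoid all hyperplanes of the arrangement. -/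
lemma interior_full_disjoint_A
    (hN : IsLattice N) (hfan : IsFan N F) (hss : SSymm F)
    (hsmooth : ∀ σ ∈ F, SmoothCone N σ)
    (hA : (A : Set (Set (Vr r))) =
      { h | ∃ τ ∈ F, spanDim τ = r - 1 ∧ h = (↑(Submodule.span ℝ τ) : Set (Vr r)) })
    {σ : Set (Vr r)} (hσF : σ ∈ F) (hσdim : spanDim σ = r)
    {H : Set (Vr r)} (hH : H ∈ (A : Set (Set (Vr r)))) :
    interior σ ∩ H = ∅ := by
  have hr : 0 < r := r_pos hfan hss
  rw [hA] at hH
  obtain ⟨τ', hτ'F, hτ'dim, rfl⟩ := hH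
  rw [Set.eq_empty_iff_forall_notMem]
  rintro y ⟨hy1, hy2⟩
  have hy3 : y ∈ ⋃₀ {τ'' ∈ F | spanDim τ'' = r - 1} :=
    span_codim1_subset_skeleton hN hfan hss hsmooth hτ'F hτ'dim hy2
  obtain ⟨τ'', ⟨hτ''F, hτ''dim⟩, hyτ''⟩ := hy3
  have hsub : σ ⊆ τ'' := interior_absorb hfan hσF hτ''F hy1 hyτ''
  have := spanDim_mono hsub
  omega

/-- A point outside the arrangement lies in the interior of a full smooth cone. -/
lemma mem_interior_of_not_mem_A
    (hN : IsLattice N) (hfan : IsFan N F) (hss : SSymm F)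
    (hsmooth : ∀ σ ∈ F, SmoothCone N σ)
    (hA : (A : Set (Set (Vr r))) =
      { h | ∃ τ ∈ F, spanDim τ = r - 1 ∧ h = (↑(Submodule.span ℝ τ) : Set (Vr r)) })
    {x : Vr r} (hx : x ∉ ⋃₀ (A : Set (Set (Vr r)))) :
    ∃ B : Module.Basis (Fin r) ℝ (Vr r), IsZBasis N ⇑B ∧
      coneGen (Finset.univ.image ⇑B) ∈ F ∧
      x ∈ interior (coneGen (Finset.univ.image ⇑B)) := by
  have hr : 0 < r := r_pos hfan hss
  obtain ⟨σ, hσF, hσdim, hxσ⟩ := exists_full_mem hN hfan hss hsmooth x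
  obtain ⟨B, s, hzb, rfl, hcard⟩ := smooth_struct hN hr (hsmooth σ hσF)
  have hsuniv : s = Finset.univ :=
    Finset.eq_univ_of_card s (by rw [hcard, hσdim, Fintype.card_fin])
  subst hsuniv
  refine ⟨B, hzb, hσF, ?_⟩
  rw [interior_coneGen_univ]
  intro i
  rcases lt_or_eq_of_le (((mem_coneGen_univ_iff B).1 hxσ) i) with h | h
  · exact h
  · exfalso
    apply hx
    have hfacetF : coneGen ((Finset.univ.erase i).image ⇑B) ∈ F := facet_mem_F hfan hσF i
    have hfa : ((Submodule.span ℝ (coneGen ((Finset.univ.erase i).image ⇑B)) :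
        Submodule ℝ (Vr r)) : Set (Vr r)) ∈ (A : Set (Set (Vr r))) := by
      rw [hA]
      exact ⟨_, hfacetF, spanDim_facet B i, rfl⟩
    refine ⟨_, hfa, Submodule.subset_span ?_⟩
    rw [← facet_eq]
    exact ⟨hxσ, h.symm⟩

lemma eq_of_interior_inter {σ σ' : Set (Vr r)} (hfan : IsFan N F)
    (hσF : σ ∈ F) (hσ'F : σ' ∈ F)
    (h : (interior σ ∩ interior σ').Nonempty) : σ = σ' := by
  obtain ⟨y, hy1, hy2⟩ := h
  exact subset_antisymm (interior_absorb hfan hσF hσ'F hy1 (interior_subset hy2))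
    (interior_absorb hfan hσ'F hσF hy2 (interior_subset hy1))

/-- Every chamber of the arrangement is the interior of a full-dimensional smooth cone. -/
lemma chamber_eq_interior
    (hN : IsLattice N) (hfan : IsFan N F) (hss : SSymm F)
    (hsmooth : ∀ σ ∈ F, SmoothCone N σ)
    (hA : (A : Set (Set (Vr r))) =
      { h | ∃ τ ∈ F, spanDim τ = r - 1 ∧ h = (↑(Submodule.span ℝ τ) : Set (Vr r)) })
    {K : Set (Vr r)} (hK : K ∈ chambers A) :
    ∃ B : Module.Basis (Fin r) ℝ (Vr r), IsZBasis N ⇑B ∧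
      coneGen (Finset.univ.image ⇑B) ∈ F ∧
      K = interior (coneGen (Finset.univ.image ⇑B)) := by
  obtain ⟨x, hx, rfl⟩ := hK
  obtain ⟨B, hzb, hσF, hxint⟩ := mem_interior_of_not_mem_A hN hfan hss hsmooth hA hx
  set σ := coneGen (Finset.univ.image ⇑B) with hσ
  refine ⟨B, hzb, hσF, ?_⟩
  set U : Set (Vr r) := ⋃₀ (A : Set (Set (Vr r))) with hU
  have hintU : ∀ {σ' : Set (Vr r)}, σ' ∈ F → spanDim σ' = r → interior σ' ⊆ Uᶜ := by
    intro σ' hσ'F hσ'dim y hy hyU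
    obtain ⟨H, hHA, hyH⟩ := hyU
    have := interior_full_disjoint_A hN hfan hss hsmooth hA hσ'F hσ'dim hHA
    rw [Set.eq_empty_iff_forall_notMem] at this
    exact this y ⟨hy, hyH⟩
  have hσdim : spanDim σ = r := by
    rw [hσ, spanDim_coneGen_image, Finset.card_univ, Fintype.card_fin]
  apply subset_antisymm
  · -- component ⊆ interior σ
    set O₂ : Set (Vr r) := ⋃₀ ((fun σ' => interior σ') ''
      {σ' ∈ F | spanDim σ' = r ∧ interior σ' ∩ interior σ = ∅}) with hO₂
    have hO₂open : IsOpen O₂ := by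
      apply isOpen_sUnion
      rintro t ⟨σ', _, rfl⟩
      exact isOpen_interior
    have hdisj : Disjoint (interior σ) O₂ := by
      rw [Set.disjoint_left]
      rintro y hy ⟨t, ⟨σ', ⟨_, _, hemp⟩, rfl⟩, hyt⟩
      rw [Set.eq_empty_iff_forall_notMem] at hemp
      exact hemp y ⟨hyt, hy⟩
    have hsub : connectedComponentIn Uᶜ x ⊆ interior σ ∪ O₂ := by
      intro z hz
      have hzU : z ∈ Uᶜ := connectedComponentIn_subset _ _ hz
      obtain ⟨B', hzb', hσ'F, hzint⟩ := mem_interior_of_not_mem_A hN hfan hss hsmooth hA hzU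
      set σ' := coneGen (Finset.univ.image ⇑B') with hσ'
      have hσ'dim : spanDim σ' = r := by
        rw [hσ', spanDim_coneGen_image, Finset.card_univ, Fintype.card_fin]
      rcases Set.eq_empty_or_nonempty (interior σ' ∩ interior σ) with hemp | hne
      · exact Or.inr ⟨interior σ', ⟨σ', ⟨hσ'F, hσ'dim, hemp⟩, rfl⟩, hzint⟩
      · left
        have : σ' = σ := eq_of_interior_inter hfan hσ'F hσF hne
        rw [← this]
        exact hzint
    apply IsPreconnected.subset_left_of_subset_union isOpen_interior hO₂open hdisj hsub
      ⟨x, mem_connectedComponentIn hx, hxint⟩ isPreconnected_connectedComponentIn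
  · -- interior σ ⊆ component
    apply IsPreconnected.subset_connectedComponentIn _ hxint (hintU hσF hσdim)
    exact ((convex_coneGen _).interior).isPreconnected

end Stmt9
namespace Stmt9

variable {r : ℕ} {N : AddSubgroup (Vr r)} {F : Set (Set (Vr r))} {A : Finset (Set (Vr r))}

lemma genMap_apply (B : Module.Basis (Fin r) ℝ (Vr r)) (s : Finset (Fin r)) (t : Fin r → ℝ) :
    genMap B s t = ∑ i ∈ s, t i • B i := rfl

/-- Given a codimension-one cone `τ` and a direction `y` off its span, there is a root
(a dual-basis covector of a full smooth cone containing `τ`) whose kernel is the span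
of `τ` and which is nonnegative at `y`. -/
lemma exists_root_on_side
    (hN : IsLattice N) (hfan : IsFan N F) (hss : SSymm F)
    (hsmooth : ∀ σ ∈ F, SmoothCone N σ)
    (hA : (A : Set (Set (Vr r))) =
      { h | ∃ τ ∈ F, spanDim τ = r - 1 ∧ h = (↑(Submodule.span ℝ τ) : Set (Vr r)) })
    {τ : Set (Vr r)} (hτF : τ ∈ F) (hτdim : spanDim τ = r - 1)
    {y : Vr r} (hy : y ∉ Submodule.span ℝ τ) :
    ∃ (B' : Module.Basis (Fin r) ℝ (Vr r)) (j : Fin r),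
      IsZBasis N ⇑B' ∧ coneGen (Finset.univ.image ⇑B') ∈ F ∧
      LinearMap.ker (B'.coord j) = Submodule.span ℝ τ ∧
      0 ≤ B'.coord j y := by
  have hr : 0 < r := r_pos hfan hss
  obtain ⟨B, s, hzb, hτeq, hcard⟩ := smooth_struct hN hr (hsmooth τ hτF)
  set H : Submodule ℝ (Vr r) := Submodule.span ℝ τ with hH
  have hHA : (H : Set (Vr r)) ∈ (A : Set (Set (Vr r))) := by
    rw [hA]; exact ⟨τ, hτF, hτdim, rfl⟩
  -- Special structure of elements of A : their spans have dimension r - 1.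
  have hAspan : ∀ H' ∈ (A : Set (Set (Vr r))),
      Module.finrank ℝ (Submodule.span ℝ H') = r - 1 ∧
      H' = ((Submodule.span ℝ H' : Submodule ℝ (Vr r)) : Set (Vr r)) := by
    intro H' hH'
    rw [hA] at hH'
    obtain ⟨τ', hτ'F, hτ'dim, rfl⟩ := hH'
    rw [Submodule.span_eq]
    exact ⟨hτ'dim, rfl⟩
  -- Step 1 : a generic point x₀ in τ, avoiding all other hyperplanes.
  have hVne : ∀ H' ∈ A, H' ≠ (H : Set (Vr r)) →
      Submodule.comap (genMap B s) (Submodule.span ℝ H') ≠ ⊤ := by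
    intro H' hH' hne htop
    have hgens : ∀ k ∈ s, B k ∈ Submodule.span ℝ H' := by
      intro k hk
      have hmem : (Pi.single k (1:ℝ)) ∈
          Submodule.comap (genMap B s) (Submodule.span ℝ H') := by rw [htop]; trivial
      rw [Submodule.mem_comap] at hmem
      have hgm : genMap B s (Pi.single k (1:ℝ)) = B k := by
        simp only [genMap, LinearMap.coe_mk, AddHom.coe_mk]
        rw [Finset.sum_eq_single k]
        · simp
        · intro b hb hbk
          rw [Pi.single_eq_of_ne hbk, zero_smul]
        · intro hks; exact absurd hk hks
      rwa [hgm] at hmem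
    have hle : H ≤ Submodule.span ℝ H' := by
      rw [hH, hτeq, span_coneGen, Submodule.span_le]
      intro v hv
      obtain ⟨k, hk, rfl⟩ := Finset.mem_image.1 (by exact_mod_cast hv)
      exact hgens k hk
    have hfr : Module.finrank ℝ H = r - 1 := hτdim
    have heq : H = Submodule.span ℝ H' :=
      Submodule.eq_of_le_of_finrank_le hle (by rw [hfr, (hAspan H' hH').1])
    apply hne
    rw [(hAspan H' hH').2, ← heq]
  obtain ⟨t, htpos, ht⟩ := exists_avoid
    (((A.erase (H : Set (Vr r))).image
      (fun H' => Submodule.comap (genMap B s) (Submodule.span ℝ H'))).toList)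
    (fun V hV => by
      rw [Finset.mem_toList, Finset.mem_image] at hV
      obtain ⟨H', hH', rfl⟩ := hV
      exact hVne H' (Finset.mem_of_mem_erase hH') (Finset.ne_of_mem_erase hH'))
    isOpen_pos_orthant ⟨fun _ => 1, fun i => one_pos⟩
  set x₀ : Vr r := ∑ i ∈ s, t i • B i with hx₀def
  have hx₀τ : x₀ ∈ τ := by
    rw [hτeq]; exact genPt_mem B s (fun i hi => le_of_lt (htpos i))
  have hx₀avoid : ∀ H' ∈ (A : Set (Set (Vr r))), H' ≠ (H : Set (Vr r)) →
      x₀ ∉ Submodule.span ℝ H' := by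
    intro H' hH' hne hmem
    refine ht (Submodule.comap (genMap B s) (Submodule.span ℝ H')) ?_ ?_
    · rw [Finset.mem_toList, Finset.mem_image]
      exact ⟨H', Finset.mem_erase.2 ⟨hne, hH'⟩, rfl⟩
    · rw [Submodule.mem_comap, genMap_apply]
      exact hmem
  -- Step 2 : the set of bad ε is finite.
  set Bad : Set ℝ := {ε : ℝ | ∃ H' ∈ (A : Set (Set (Vr r))), x₀ + ε • y ∈ Submodule.span ℝ H'}
    with hBadDef
  have hBadfin : Bad.Finite := by
    have hsub : Bad ⊆ ⋃ H' ∈ (A : Set (Set (Vr r))),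
        {ε : ℝ | x₀ + ε • y ∈ Submodule.span ℝ H'} := by
      rintro ε ⟨H', hH', hmem⟩
      exact Set.mem_biUnion hH' hmem
    refine Set.Finite.subset (Set.Finite.biUnion A.finite_toSet (fun H' hH' => ?_)) hsub
    apply Set.Subsingleton.finite
    intro ε₁ h1 ε₂ h2
    by_contra hne12
    have hyH' : y ∈ Submodule.span ℝ H' := by
      have hd : (ε₁ - ε₂) • y ∈ Submodule.span ℝ H' := by
        have heq12 : (x₀ + ε₁ • y) - (x₀ + ε₂ • y) = (ε₁ - ε₂) • y := by
          rw [sub_smul]; abel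
        rw [← heq12]
        exact Submodule.sub_mem _ h1 h2
      have hne' : (ε₁ - ε₂) ≠ 0 := sub_ne_zero.2 hne12
      have := Submodule.smul_mem _ (ε₁ - ε₂)⁻¹ hd
      rwa [smul_smul, inv_mul_cancel₀ hne', one_smul] at this
    have hx₀H' : x₀ ∈ Submodule.span ℝ H' := by
      have : (x₀ + ε₁ • y) - ε₁ • y = x₀ := by abel
      rw [← this]
      exact Submodule.sub_mem _ h1 (Submodule.smul_mem _ _ hyH')
    rcases em (H' = (H : Set (Vr r))) with rfl | hne
    · apply hy
      have : Submodule.span ℝ ((H : Submodule ℝ (Vr r)) : Set (Vr r)) = H := Submodule.span_eq H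
      rwa [this] at hyH'
    · exact hx₀avoid H' hH' hne hx₀H'
  -- Step 3 : small good ε, and points on the y-side of τ.
  have hεex : ∀ n : ℕ, ∃ ε : ℝ, ε ∈ Set.Ioo (0:ℝ) (1 / (n + 1)) \ Bad := by
    intro n
    have hlt : (0:ℝ) < 1 / (n + 1) := by positivity
    have : (Set.Ioo (0:ℝ) (1 / (n + 1))).Infinite := Set.infinite_coe_iff.1 (Set.Ioo.infinite hlt)
    exact (this.diff hBadfin).nonempty
  choose ε hε using hεex
  have hεpos : ∀ n, 0 < ε n := fun n => ((hε n).1).1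
  have hεsmall : ∀ n, ε n < 1 / (n + 1) := fun n => ((hε n).1).2
  have hεgood : ∀ n, x₀ + ε n • y ∉ ⋃₀ (A : Set (Set (Vr r))) := by
    intro n hmem
    obtain ⟨H', hH', hm⟩ := hmem
    exact (hε n).2 ⟨H', hH', Submodule.subset_span hm⟩
  have hzint := fun n => mem_interior_of_not_mem_A hN hfan hss hsmooth hA (hεgood n)
  choose Bf hBfzb hBfF hBfint using hzint
  -- Step 4 : pigeonhole, a single full cone occurring infinitely often.
  have : ∃ sighat : ↥(hfan.finite.toFinset),
      {n : ℕ | (⟨coneGen (Finset.univ.image ⇑(Bf n)),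
        by rw [Set.Finite.mem_toFinset]; exact hBfF n⟩ : ↥(hfan.finite.toFinset)) = sighat}.Infinite := by
    obtain ⟨sighat, hsighat⟩ := Finite.exists_infinite_fiber
      (fun n : ℕ => (⟨coneGen (Finset.univ.image ⇑(Bf n)),
        by rw [Set.Finite.mem_toFinset]; exact hBfF n⟩ : ↥(hfan.finite.toFinset)))
    exact ⟨sighat, Set.infinite_coe_iff.1 hsighat⟩
  obtain ⟨sighat, hS⟩ := this
  set S : Set ℕ := {n : ℕ | (⟨coneGen (Finset.univ.image ⇑(Bf n)),
    by rw [Set.Finite.mem_toFinset]; exact hBfF n⟩ : ↥(hfan.finite.toFinset)) = sighat} with hSdef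
  obtain ⟨n₀, hn₀⟩ := hS.nonempty
  set B' : Module.Basis (Fin r) ℝ (Vr r) := Bf n₀ with hB'
  set σ' : Set (Vr r) := coneGen (Finset.univ.image ⇑B') with hσ'
  have hσ'F : σ' ∈ F := hBfF n₀
  have hσcoe : ∀ n ∈ S, coneGen (Finset.univ.image ⇑(Bf n)) = σ' := by
    intro n hn
    have h1 : (⟨coneGen (Finset.univ.image ⇑(Bf n)),
        by rw [Set.Finite.mem_toFinset]; exact hBfF n⟩ : ↥(hfan.finite.toFinset)) = sighat := hn
    have h2 : (⟨coneGen (Finset.univ.image ⇑(Bf n₀)),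
        by rw [Set.Finite.mem_toFinset]; exact hBfF n₀⟩ : ↥(hfan.finite.toFinset)) = sighat := hn₀
    exact congrArg Subtype.val (h1.trans h2.symm)
  -- x₀ belongs to σ'.
  have hx₀σ' : x₀ ∈ σ' := by
    rw [hσ', mem_coneGen_univ_iff]
    intro j
    by_contra hneg
    push_neg at hneg
    set c : ℝ := B'.coord j x₀ with hc
    have hcneg : c < 0 := hneg
    set d : ℝ := B'.coord j y with hd
    -- pick n ∈ S with 1/(n+1) < -c/(|d|+1)
    obtain ⟨M, hM⟩ := exists_nat_gt ((|d| + 1) / (-c))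
    obtain ⟨n, hnS, hnM⟩ := hS.exists_gt M
    have hnmem : x₀ + ε n • y ∈ σ' := by
      rw [← hσcoe n hnS]
      exact interior_subset (hBfint n)
    have hcoord : 0 ≤ c + ε n * d := by
      have := (mem_coneGen_univ_iff B').1 (by rwa [hσ'] at hnmem) j
      rwa [map_add, map_smul, smul_eq_mul, ← hc, ← hd] at this
    have hεn : ε n < -c / (|d| + 1) := by
      have h1 : ε n < 1 / (n + 1) := hεsmall n
      have h2 : (1:ℝ) / (n + 1) ≤ 1 / (M + 1) := by
        apply one_div_le_one_div_of_le (by positivity)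
        have : (M:ℝ) < n := by exact_mod_cast hnM
        linarith
      have h3 : (1:ℝ) / (M + 1) < -c / (|d| + 1) := by
        rw [div_lt_div_iff₀ (by positivity) (by positivity)]
        have h4 : (|d| + 1) / (-c) < M := hM
        rw [div_lt_iff₀ (by linarith)] at h4
        nlinarith
      linarith
    have habs : ε n * d ≤ ε n * (|d| + 1) := by
      apply mul_le_mul_of_nonneg_left _ (le_of_lt (hεpos n))
      have := le_abs_self d
      linarith
    have : ε n * (|d| + 1) < -c := by
      rw [lt_div_iff₀ (by positivity : (0:ℝ) < |d| + 1)] at hεn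
      linarith
    linarith
  -- τ is contained in σ'.
  have hτσ' : τ ⊆ σ' := by
    apply subset_of_face_genPt B s hτeq (hfan.inter τ hτF σ' hσ'F).1
      (fun i _ => htpos i)
    exact ⟨hx₀τ, hx₀σ'⟩
  -- x₀ is not interior to σ', find the vanishing coordinate.
  have hnotint : x₀ ∉ interior σ' := by
    intro hint
    have hsub : σ' ⊆ τ := interior_absorb hfan hσ'F hτF hint hx₀τ
    have h1 := spanDim_mono hsub
    have h2 : spanDim σ' = r := by
      rw [hσ', spanDim_coneGen_image, Finset.card_univ, Fintype.card_fin]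
    omega
  obtain ⟨j, hj⟩ : ∃ j, B'.coord j x₀ = 0 := by
    by_contra hcon
    push_neg at hcon
    apply hnotint
    rw [hσ', interior_coneGen_univ]
    intro j
    have h0 := (mem_coneGen_univ_iff B').1 (by rwa [hσ'] at hx₀σ') j
    exact lt_of_le_of_ne h0 (fun h => hcon j h.symm)
  -- the coordinate vanishes on all of τ.
  have hvanish : ∀ k ∈ s, B'.coord j (B k) = 0 := by
    have hsum : ∑ i ∈ s, t i * B'.coord j (B i) = 0 := by
      rw [← hj, hx₀def, map_sum]; simp [map_smul]
    have hnn : ∀ i ∈ s, 0 ≤ t i * B'.coord j (B i) := by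
      intro i hi
      apply mul_nonneg (le_of_lt (htpos i))
      have hBiτ : B i ∈ τ := by
        rw [hτeq]; exact mem_coneGen (Finset.mem_image_of_mem _ hi)
      exact (mem_coneGen_univ_iff B').1 (by rw [← hσ']; exact hτσ' hBiτ) j
    intro k hk
    have := (Finset.sum_eq_zero_iff_of_nonneg hnn).1 hsum k hk
    rcases mul_eq_zero.1 this with h | h
    · exact absurd h (ne_of_gt (htpos k))
    · exact h
  have hker : LinearMap.ker (B'.coord j) = H := by
    symm
    apply span_eq_ker (coord_ne_zero B' j)
    · rw [hH, hτeq, span_coneGen, Submodule.span_le]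
      intro v hv
      obtain ⟨k, hk, rfl⟩ := Finset.mem_image.1 (by exact_mod_cast hv)
      exact hvanish k hk
    · exact hτdim
  -- the sign at y.
  have hsign : 0 ≤ B'.coord j y := by
    have hmem : x₀ + ε n₀ • y ∈ σ' := by
      rw [← hσcoe n₀ hn₀]
      exact interior_subset (hBfint n₀)
    have := (mem_coneGen_univ_iff B').1 (by rwa [hσ'] at hmem) j
    rw [map_add, map_smul, hj, zero_add, smul_eq_mul] at this
    exact nonneg_of_mul_nonneg_right this (hεpos n₀)
  exact ⟨B', j, hBfzb n₀, hσ'F, by rw [hker], hsign⟩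

end Stmt9
namespace Stmt9

variable {r : ℕ} {N : AddSubgroup (Vr r)} {F : Set (Set (Vr r))} {A : Finset (Set (Vr r))}

/-- The set of roots : dual basis covectors of the full smooth cones. -/
def rootSet (N : AddSubgroup (Vr r)) (F : Set (Set (Vr r))) : Set (Vr r →ₗ[ℝ] ℝ) :=
  {α | ∃ b : Module.Basis (Fin r) ℝ (Vr r), IsZBasis N ⇑b ∧
    coneGen (Finset.univ.image ⇑b) ∈ F ∧ ∃ i : Fin r, α = b.coord i}

lemma ker0_eq_coe (α : Vr r →ₗ[ℝ] ℝ) :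
    ker0 α = ((LinearMap.ker α : Submodule ℝ (Vr r)) : Set (Vr r)) := by
  ext x; simp [ker0, LinearMap.mem_ker]

lemma root_nonzero {α : Vr r →ₗ[ℝ] ℝ} (hα : α ∈ rootSet N F) : α ≠ 0 := by
  obtain ⟨b, _, _, i, rfl⟩ := hα
  exact coord_ne_zero b i

lemma root_int {α : Vr r →ₗ[ℝ] ℝ} (hα : α ∈ rootSet N F) {x : Vr r} (hx : x ∈ N) :
    ∃ k : ℤ, α x = k := by
  obtain ⟨b, hzb, _, i, rfl⟩ := hα
  exact coord_int_of_mem hzb hx i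

lemma root_norm {α : Vr r →ₗ[ℝ] ℝ} (hα : α ∈ rootSet N F) :
    ∃ v ∈ N, α v = 1 := by
  obtain ⟨b, hzb, _, i, rfl⟩ := hα
  exact ⟨b i, mem_N_of_range hzb i, coord_apply_self b i⟩

/-- Two proportional roots are equal up to sign. -/
lemma root_prop_sign {α β : Vr r →ₗ[ℝ] ℝ} (hα : α ∈ rootSet N F) (hβ : β ∈ rootSet N F)
    {c : ℝ} (hc : β = c • α) : c = 1 ∨ c = -1 := by
  obtain ⟨v, hvN, hv⟩ := root_norm hα
  obtain ⟨w, hwN, hw⟩ := root_norm hβ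
  obtain ⟨m, hm⟩ := root_int hβ hvN
  obtain ⟨k, hk⟩ := root_int hα hwN
  have hcm : c = (m : ℝ) := by
    rw [← hm, hc]
    simp [hv]
  have h1 : (m : ℝ) * (k : ℝ) = 1 := by
    rw [← hk, ← hcm]
    rw [hc] at hw
    simpa using hw
  have h2 : m * k = 1 := by
    exact_mod_cast h1
  rcases Int.isUnit_iff.1 (IsUnit.of_mul_eq_one (a := m) k h2) with h | h
  · left; rw [hcm, h]; norm_num
  · right; rw [hcm, h]; norm_num

lemma root_reduced {α β : Vr r →ₗ[ℝ] ℝ} (hα : α ∈ rootSet N F) (hβ : β ∈ rootSet N F)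
    {c : ℝ} (hc : β = c • α) : β = α ∨ β = -α := by
  rcases root_prop_sign hα hβ hc with h | h
  · left; rw [hc, h, one_smul]
  · right; rw [hc, h]; module

lemma root_same_ker {α β : Vr r →ₗ[ℝ] ℝ} (hα : α ∈ rootSet N F) (hβ : β ∈ rootSet N F)
    (h : ker0 α = ker0 β) : β = α ∨ β = -α := by
  obtain ⟨v, _, hv⟩ := root_norm hα
  have hprop : β = β v • α := by
    apply proportional_of_ker_sub hv
    intro u hu
    have : u ∈ ker0 β := h ▸ hu
    exact this
  exact root_reduced hα hβ hprop

/-- The kernels of roots are hyperplanes of the arrangement. -/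
lemma root_ker_mem_A
    (hfan : IsFan N F)
    (hA : (A : Set (Set (Vr r))) =
      { h | ∃ τ ∈ F, spanDim τ = r - 1 ∧ h = (↑(Submodule.span ℝ τ) : Set (Vr r)) })
    {α : Vr r →ₗ[ℝ] ℝ} (hα : α ∈ rootSet N F) : ker0 α ∈ (A : Set (Set (Vr r))) := by
  obtain ⟨b, hzb, hbF, i, rfl⟩ := hα
  rw [hA]
  refine ⟨coneGen ((Finset.univ.erase i).image ⇑b), facet_mem_F hfan hbF i,
    spanDim_facet b i, ?_⟩
  rw [ker0_eq_coe, ← span_facet_eq_ker b i]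

lemma rootSet_finite
    (hfan : IsFan N F)
    (hA : (A : Set (Set (Vr r))) =
      { h | ∃ τ ∈ F, spanDim τ = r - 1 ∧ h = (↑(Submodule.span ℝ τ) : Set (Vr r)) }) :
    (rootSet N F).Finite := by
  have hsub : rootSet N F ⊆ ⋃ H ∈ (A : Set (Set (Vr r))),
      {α | α ∈ rootSet N F ∧ ker0 α = H} := by
    intro α hα
    exact Set.mem_biUnion (root_ker_mem_A hfan hA hα) ⟨hα, rfl⟩
  refine Set.Finite.subset (Set.Finite.biUnion A.finite_toSet (fun H _ => ?_)) hsub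
  rcases Set.eq_empty_or_nonempty {α | α ∈ rootSet N F ∧ ker0 α = H} with he | ⟨α₀, hα₀⟩
  · rw [he]; exact Set.finite_empty
  · apply Set.Finite.subset (Set.Finite.insert α₀ (Set.finite_singleton (-α₀)))
    rintro β ⟨hβ, hkβ⟩
    rcases root_same_ker hα₀.1 hβ (hα₀.2.trans hkβ.symm) with h | h
    · exact Set.mem_insert_iff.2 (Or.inl h)
    · exact Set.mem_insert_iff.2 (Or.inr (by rw [h]; exact Set.mem_singleton _))

/-- Every hyperplane of the arrangement is the kernel of a root. -/
lemma A_sub_root_kers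
    (hN : IsLattice N) (hfan : IsFan N F) (hss : SSymm F)
    (hsmooth : ∀ σ ∈ F, SmoothCone N σ)
    (hA : (A : Set (Set (Vr r))) =
      { h | ∃ τ ∈ F, spanDim τ = r - 1 ∧ h = (↑(Submodule.span ℝ τ) : Set (Vr r)) })
    {H : Set (Vr r)} (hH : H ∈ (A : Set (Set (Vr r)))) :
    ∃ α ∈ rootSet N F, ker0 α = H := by
  have hr : 0 < r := r_pos hfan hss
  rw [hA] at hH
  obtain ⟨τ, hτF, hτdim, rfl⟩ := hH
  have hne : Submodule.span ℝ τ ≠ ⊤ := by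
    intro h
    have : spanDim τ = r := by
      rw [spanDim, h, finrank_top, finrank_Vr]
    omega
  obtain ⟨y, hy⟩ : ∃ y, y ∉ Submodule.span ℝ τ := by
    by_contra hc
    push_neg at hc
    exact hne (Submodule.eq_top_iff'.2 hc)
  obtain ⟨B', j, hzb', hB'F, hker, _⟩ :=
    exists_root_on_side hN hfan hss hsmooth hA hτF hτdim hy
  exact ⟨B'.coord j, ⟨B', hzb', hB'F, j, rfl⟩, by rw [ker0_eq_coe, hker]⟩

/-- Negatives of roots are roots. -/
lemma root_neg_mem
    (hN : IsLattice N) (hfan : IsFan N F) (hss : SSymm F)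
    (hsmooth : ∀ σ ∈ F, SmoothCone N σ)
    (hA : (A : Set (Set (Vr r))) =
      { h | ∃ τ ∈ F, spanDim τ = r - 1 ∧ h = (↑(Submodule.span ℝ τ) : Set (Vr r)) })
    {α : Vr r →ₗ[ℝ] ℝ} (hα : α ∈ rootSet N F) : -α ∈ rootSet N F := by
  obtain ⟨b, hzb, hbF, i, rfl⟩ := hα
  set τ : Set (Vr r) := coneGen ((Finset.univ.erase i).image ⇑b) with hτ
  have hτF : τ ∈ F := facet_mem_F hfan hbF i
  have hτdim : spanDim τ = r - 1 := spanDim_facet b i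
  have hspan : Submodule.span ℝ τ = LinearMap.ker (b.coord i) := span_facet_eq_ker b i
  have hy : -(b i) ∉ Submodule.span ℝ τ := by
    rw [hspan, LinearMap.mem_ker, map_neg, coord_apply_self]
    norm_num
  obtain ⟨B', j, hzb', hB'F, hker, hsign⟩ :=
    exists_root_on_side hN hfan hss hsmooth hA hτF hτdim hy
  have hβS : B'.coord j ∈ rootSet N F := ⟨B', hzb', hB'F, j, rfl⟩
  have hαS : b.coord i ∈ rootSet N F := ⟨b, hzb, hbF, i, rfl⟩
  -- B'.coord j is proportional to b.coord i
  have hprop : B'.coord j = (B'.coord j (b i)) • b.coord i := by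
    apply proportional_of_ker_sub (coord_apply_self b i)
    intro u hu
    have : u ∈ LinearMap.ker (B'.coord j) := by
      rw [hker, hspan, LinearMap.mem_ker]; exact hu
    exact this
  have hc : B'.coord j (b i) ≤ 0 := by
    rw [map_neg] at hsign
    linarith
  rcases root_prop_sign hαS hβS hprop with h | h
  · exfalso; rw [h] at hc; norm_num at hc
  · rw [h] at hprop
    have : B'.coord j = -(b.coord i) := by rw [hprop]; module
    rw [← this]
    exact hβS

end Stmt9

open Stmt9

/-- the arrangement of spans of codimension-one cones of a smooth
strongly symmetric fan is simplicial and carries a set of covectors `R` making it a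
crystallographic arrangement; `R` can be taken to be the union over the maximal cones
of the dual bases of the ℤ-bases generating them. -/
theorem stmt9 {r : ℕ} (N : AddSubgroup (Vr r)) (F : Set (Set (Vr r)))
    (hN : IsLattice N) (hfan : IsFan N F) (hss : SSymm F)
    (hsmooth : ∀ σ ∈ F, SmoothCone N σ)
    (A : Finset (Set (Vr r)))
    (hA : (A : Set (Set (Vr r))) =
      { h | ∃ τ ∈ F, spanDim τ = r - 1 ∧ h = (↑(Submodule.span ℝ τ) : Set (Vr r)) }) :
    ∃ R : Finset (Vr r →ₗ[ℝ] ℝ), IsCrystArr A R ∧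
      ∀ α : Vr r →ₗ[ℝ] ℝ, α ∈ R ↔
        ∃ b : Module.Basis (Fin r) ℝ (Vr r), IsZBasis N ⇑b ∧
          coneGen (Finset.univ.image ⇑b) ∈ F ∧ ∃ i : Fin r, α = b.coord i := by
    classical
  have hSfin := rootSet_finite hfan hA
  refine ⟨hSfin.toFinset, ?_, fun α => by rw [Set.Finite.mem_toFinset]; exact Iff.rfl⟩
  refine { simplicial := ?_, hyps := ?_, nonzero := ?_, neg_mem := ?_,
           reduced := ?_, integral := ?_ }
  · -- simplicial
    intro K hK
    obtain ⟨B, hzb, hBF, rfl⟩ := chamber_eq_interior hN hfan hss hsmooth hA hK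
    refine ⟨⇑B, B.linearIndependent, ?_⟩
    rw [interior_coneGen_univ]
    ext x
    constructor
    · intro hx
      refine ⟨fun i => B.coord i x, hx, ?_⟩
      exact (B.sum_repr x).symm
    · rintro ⟨c, hc, rfl⟩ i
      have := coord_genPt B Finset.univ c i
      rw [this]
      simpa using hc i
  · -- hyps
    ext H
    constructor
    · intro hH
      obtain ⟨α, hα, hk⟩ := A_sub_root_kers hN hfan hss hsmooth hA hH
      exact ⟨α, by rw [Finset.mem_coe, Set.Finite.mem_toFinset]; exact hα, hk⟩
    · rintro ⟨α, hα, rfl⟩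
      rw [Finset.mem_coe, Set.Finite.mem_toFinset] at hα
      exact root_ker_mem_A hfan hA hα
  · -- nonzero
    intro α hα
    rw [Set.Finite.mem_toFinset] at hα
    exact root_nonzero hα
  · -- neg_mem
    intro α hα
    rw [Set.Finite.mem_toFinset] at hα ⊢
    exact root_neg_mem hN hfan hss hsmooth hA hα
  · -- reduced
    intro α hα β hβ hc
    rw [Set.Finite.mem_toFinset] at hα hβ
    obtain ⟨c, hc⟩ := hc
    exact root_reduced hα hβ hc
  · -- integral
    intro K hK β hβ
    rw [Set.Finite.mem_toFinset] at hβ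
    obtain ⟨B, hzb, hBF, rfl⟩ := chamber_eq_interior hN hfan hss hsmooth hA hK
    set σ : Set (Vr r) := coneGen (Finset.univ.image ⇑B) with hσ
    have hcoordS : ∀ i, B.coord i ∈ rootSet N F := fun i => ⟨B, hzb, hBF, i, rfl⟩
    have hBK : ∀ i, B.coord i ∈ BK A hSfin.toFinset (interior σ) := by
      intro i
      rw [BK, Finset.mem_filter]
      refine ⟨Set.Finite.mem_toFinset hSfin |>.2 (hcoordS i), ⟨?_, ?_⟩, ?_⟩
      · exact root_ker_mem_A hfan hA (hcoordS i)
      · have hcl : closure (interior σ) = σ := closure_interior_coneGen_univ B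
        rw [hcl]
        have : ker0 (B.coord i) ∩ σ = σ ∩ {x | B.coord i x = 0} := Set.inter_comm _ _
        rw [this, hσ, facet_eq]
        exact spanDim_facet B i
      · intro x hx
        exact (mem_coneGen_univ_iff B).1 (interior_subset hx) i
    choose k hk using fun i => root_int hβ (mem_N_of_range hzb i)
    have hβeq : β = ∑ i, (k i : ℤ) • B.coord i := by
      apply B.ext
      intro l
      rw [hk l, LinearMap.sum_apply]
      rw [Finset.sum_eq_single l]
      · rw [LinearMap.smul_apply, coord_apply_self]
        simp
      · intro j _ hjl
        rw [LinearMap.smul_apply, coord_apply_ne B (Ne.symm hjl), smul_zero]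
      · intro h; exact absurd (Finset.mem_univ l) h
    rw [hβeq]
    apply Submodule.sum_mem
    intro i _
    exact Submodule.smul_mem _ (k i) (Submodule.subset_span (Finset.mem_coe.2 (hBK i)))
end

section
/- Let (A, R) be a crystallographic arrangement. For each chamber K let ρ^K = (1/2)∑_{α ∈ R_+^K} α, where R_+^K = R ∩ ∑_{α∈B^K} ℝ_{≥0} α. Then for any two chambers K and K', the point ρ^K lies in the cone S^{K'} = ρ^{K'} − ∑_{α∈B^{K'}} ℝ_{≥0} α; consequently the set {ρ^K : K a chamber} is the vertex set of the convex polytope P = ⋂_K S^K, and P is an integral polytope in (1/2)M where M = ∑_{α∈R} ℤα. -/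
open scoped Classical Pointwise BigOperators

/-- The simplicial cone `S^K = ρ^K − cone(B^K)` in the dual space. -/
def SK {r : ℕ} (A : Finset (Set (Vr r))) (R : Finset (Vr r →ₗ[ℝ] ℝ)) (K : Set (Vr r)) :
    Set (Vr r →ₗ[ℝ] ℝ) :=
  { f | ∃ y ∈ coneGen (BK A R K), f = rhoK A R K - y }

namespace Stmt11Aux
open Module Set

variable {r : ℕ} {A : Finset (Set (Vr r))} {R : Finset (Vr r →ₗ[ℝ] ℝ)}

lemma ker0_closed (α : Vr r →ₗ[ℝ] ℝ) : IsClosed (ker0 α) :=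
  IsClosed.preimage α.continuous_of_finiteDimensional isClosed_singleton

lemma isOpen_compl (hcr : IsCrystArr A R) : IsOpen (⋃₀ (A : Set (Set (Vr r))))ᶜ := by
  rw [Set.sUnion_eq_biUnion]
  refine (Set.Finite.isClosed_biUnion A.finite_toSet ?_).isOpen_compl
  intro H hH
  have : H ∈ (A : Set (Set (Vr r))) := hH
  rw [hcr.hyps] at this
  obtain ⟨α, -, rfl⟩ := this
  exact ker0_closed α

lemma chamber_subset {K : Set (Vr r)} (hK : K ∈ chambers A) : K ⊆ (⋃₀ (A : Set (Set (Vr r))))ᶜ := by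
  obtain ⟨x, hx, rfl⟩ := hK
  exact connectedComponentIn_subset _ _

lemma chamber_cci {K : Set (Vr r)} (hK : K ∈ chambers A) {y : Vr r} (hy : y ∈ K) :
    connectedComponentIn (⋃₀ (A : Set (Set (Vr r))))ᶜ y = K := by
  obtain ⟨x, hx, rfl⟩ := hK
  exact (connectedComponentIn_eq hy).symm

lemma root_ne {K : Set (Vr r)} (hcr : IsCrystArr A R) (hK : K ∈ chambers A)
    {α : Vr r →ₗ[ℝ] ℝ} (hα : α ∈ R) {y : Vr r} (hy : y ∈ K) : α y ≠ 0 := by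
  intro h0
  have : y ∈ ⋃₀ (A : Set (Set (Vr r))) := ⟨ker0 α, by rw [hcr.hyps]; exact ⟨α, hα, rfl⟩, h0⟩
  exact chamber_subset hK hy this


section ConeGen
variable {M : Type*} [AddCommGroup M] [Module ℝ M] {s : Finset M}

lemma mem_coneGen {v : M} (hv : v ∈ s) : v ∈ coneGen s := by
  refine ⟨fun w => if w = v then 1 else 0, fun w => by positivity, ?_⟩
  have : ∀ w ∈ s, (if w = v then (1:ℝ) else 0) • w = if w = v then w else 0 :=
    fun w _ => by split <;> simp
  rw [Finset.sum_congr rfl this, Finset.sum_ite_eq' s v (fun w => w), if_pos hv]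

lemma coneGen_zero : (0 : M) ∈ coneGen s :=
  ⟨0, fun _ => le_refl 0, by simp⟩

lemma coneGen_add {x y : M} (hx : x ∈ coneGen s) (hy : y ∈ coneGen s) :
    x + y ∈ coneGen s := by
  obtain ⟨c, hc, rfl⟩ := hx
  obtain ⟨d, hd, rfl⟩ := hy
  exact ⟨c + d, fun v => add_nonneg (hc v) (hd v), by
    rw [← Finset.sum_add_distrib]; exact Finset.sum_congr rfl fun v _ => (add_smul _ _ _).symm⟩

lemma coneGen_smul {t : ℝ} (ht : 0 ≤ t) {x : M} (hx : x ∈ coneGen s) :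
    t • x ∈ coneGen s := by
  obtain ⟨c, hc, rfl⟩ := hx
  refine ⟨fun v => t * c v, fun v => mul_nonneg ht (hc v), by
    rw [Finset.smul_sum]; exact Finset.sum_congr rfl fun v _ => by simp [smul_smul]⟩

lemma coneGen_sum {ι : Type*} (D : Finset ι) (f : ι → M)
    (h : ∀ i ∈ D, f i ∈ coneGen s) : ∑ i ∈ D, f i ∈ coneGen s := by
  classical
  induction D using Finset.induction_on with
  | empty => simpa using (coneGen_zero : (0:M) ∈ coneGen s)
  | @insert a D hnot ih =>
    rw [Finset.sum_insert hnot]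
    exact coneGen_add (h a (Finset.mem_insert_self a D))
      (ih fun i hi => h i (Finset.mem_insert_of_mem hi))

lemma coneGen_convex : Convex ℝ (coneGen s) := by
  intro x hx y hy a b ha hb _
  exact coneGen_add (coneGen_smul ha hx) (coneGen_smul hb hy)

end ConeGen

section Eval
variable {r : ℕ} {s : Finset (Vr r →ₗ[ℝ] ℝ)}

lemma coneGen_eval_nonneg {x : Vr r} (hx : ∀ v ∈ s, 0 ≤ v x)
    {y : Vr r →ₗ[ℝ] ℝ} (hy : y ∈ coneGen s) : 0 ≤ y x := by
  obtain ⟨c, hc, rfl⟩ := hy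
  rw [LinearMap.sum_apply]
  exact Finset.sum_nonneg fun v hv => by
    rw [LinearMap.smul_apply, smul_eq_mul]; exact mul_nonneg (hc v) (hx v hv)

lemma coneGen_eval_eq_zero {x : Vr r} (hx : ∀ v ∈ s, 0 < v x)
    {y : Vr r →ₗ[ℝ] ℝ} (hy : y ∈ coneGen s) (h0 : y x = 0) : y = 0 := by
  obtain ⟨c, hc, rfl⟩ := hy
  rw [LinearMap.sum_apply] at h0
  have hz : ∀ v ∈ s, c v * v x = 0 := by
    have := (Finset.sum_eq_zero_iff_of_nonneg (fun v hv =>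
      mul_nonneg (hc v) (hx v hv).le)).mp ?_
    · intro v hv
      exact this v hv
    · rw [← h0]; exact Finset.sum_congr rfl fun v _ => by
        rw [LinearMap.smul_apply, smul_eq_mul]
  refine Finset.sum_eq_zero fun v hv => ?_
  have : c v = 0 := by
    rcases mul_eq_zero.mp (hz v hv) with h | h
    · exact h
    · exact absurd h (hx v hv).ne'
  rw [this, zero_smul]

lemma closure_halfspace {α : Vr r →ₗ[ℝ] ℝ} {K : Set (Vr r)} (h : K ⊆ {x | 0 ≤ α x}) :
    closure K ⊆ {x | 0 ≤ α x} :=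
  closure_minimal h (IsClosed.preimage α.continuous_of_finiteDimensional isClosed_Ici)

end Eval

section BKfacts
variable {r : ℕ} {A : Finset (Set (Vr r))} {R : Finset (Vr r →ₗ[ℝ] ℝ)} {K : Set (Vr r)}

lemma BK_subset : BK A R K ⊆ R := Finset.filter_subset _ _

lemma BK_pos (hcr : IsCrystArr A R) (hK : K ∈ chambers A)
    {v : Vr r →ₗ[ℝ] ℝ} (hv : v ∈ BK A R K) {y : Vr r} (hy : y ∈ K) : 0 < v y := by
  have h := Finset.mem_filter.mp hv
  exact lt_of_le_of_ne (h.2.2 hy) (Ne.symm (root_ne hcr hK h.1 hy))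

lemma BK_nonneg_closure {v : Vr r →ₗ[ℝ] ℝ} (hv : v ∈ BK A R K)
    {x : Vr r} (hx : x ∈ closure K) : 0 ≤ v x :=
  closure_halfspace (Finset.mem_filter.mp hv).2.2 hx

end BKfacts

section Chamber
variable {r : ℕ} {A : Finset (Set (Vr r))} {R : Finset (Vr r →ₗ[ℝ] ℝ)}
variable {K : Set (Vr r)} {b : Fin r → Vr r}

lemma chamber_desc (hcr : IsCrystArr A R) {K : Set (Vr r)} (hK : K ∈ chambers A) :
    ∃ b : Fin r → Vr r, LinearIndependent ℝ b ∧
      K = { x | ∃ c : Fin r → ℝ, (∀ i, 0 < c i) ∧ x = ∑ i, c i • b i } :=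
  hcr.simplicial K hK

lemma chamber_convex
    (hKb : K = { x | ∃ c : Fin r → ℝ, (∀ i, 0 < c i) ∧ x = ∑ i, c i • b i }) :
    Convex ℝ K := by
  subst hKb
  rintro x ⟨c, hc, rfl⟩ y ⟨d, hd, rfl⟩ a a' ha ha' haa
  refine ⟨fun i => a * c i + a' * d i, fun i => ?_, ?_⟩
  · rcases eq_or_lt_of_le ha with h | h
    · rw [← h] at haa ⊢
      have : a' = 1 := by linarith
      rw [this]; simpa using hd i
    · exact add_pos_of_pos_of_nonneg (mul_pos h (hc i)) (mul_nonneg ha' (hd i).le)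
  · rw [Finset.smul_sum, Finset.smul_sum, ← Finset.sum_add_distrib]
    exact Finset.sum_congr rfl fun i _ => by
      rw [add_smul, smul_smul, smul_smul]

lemma chamber_nonempty'
    (hKb : K = { x | ∃ c : Fin r → ℝ, (∀ i, 0 < c i) ∧ x = ∑ i, c i • b i }) :
    (∑ i, b i) ∈ K := by
  subst hKb; exact ⟨fun _ => 1, fun _ => one_pos, by simp⟩

lemma mem_closure_basis
    (hKb : K = { x | ∃ c : Fin r → ℝ, (∀ i, 0 < c i) ∧ x = ∑ i, c i • b i })
    (i : Fin r) : b i ∈ closure K := by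
  have hmem : ∀ n : ℕ, b i + (1 / (n + 1) : ℝ) • ∑ j ∈ Finset.univ.erase i, b j ∈ K := by
    intro n
    rw [hKb]
    refine ⟨fun j => if j = i then 1 else 1 / (n + 1), fun j => ?_, ?_⟩
    · simp only; split <;> positivity
    · simp only
      rw [← Finset.add_sum_erase _ (fun j => (if j = i then (1:ℝ) else 1 / (n + 1)) • b j)
        (Finset.mem_univ i), if_pos rfl, one_smul, Finset.smul_sum]
      congr 1
      refine Finset.sum_congr rfl fun j hj => ?_
      rw [if_neg (Finset.mem_erase.mp hj).1]
  have htend : Filter.Tendsto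
      (fun n : ℕ => b i + (1 / (n + 1) : ℝ) • ∑ j ∈ Finset.univ.erase i, b j)
      Filter.atTop (nhds (b i)) := by
    have h1 : Filter.Tendsto (fun n : ℕ => (1 / (n + 1) : ℝ)) Filter.atTop (nhds 0) :=
      tendsto_one_div_add_atTop_nhds_zero_nat
    have := (h1.smul_const (∑ j ∈ Finset.univ.erase i, b j)).const_add (b i)
    simpa using this
  exact mem_closure_of_tendsto htend (Filter.Eventually.of_forall hmem)

lemma sign_const (hcr : IsCrystArr A R) (hK : K ∈ chambers A)
    (hKb : K = { x | ∃ c : Fin r → ℝ, (∀ i, 0 < c i) ∧ x = ∑ i, c i • b i })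
    {α : Vr r →ₗ[ℝ] ℝ} (hα : α ∈ R) {x y : Vr r} (hx : x ∈ K) (hy : y ∈ K)
    (hpos : 0 < α x) : 0 < α y := by
  by_contra hne
  have hyneg : α y < 0 := lt_of_le_of_ne (not_lt.mp hne) (root_ne hcr hK hα hy)
  set t : ℝ := α x / (α x - α y) with ht
  have hden : 0 < α x - α y := by linarith
  have ht0 : 0 < t := div_pos hpos hden
  have ht1 : t < 1 := (div_lt_one hden).mpr (by linarith)
  have hz : (1 - t) • x + t • y ∈ K :=
    chamber_convex hKb hx hy (by linarith) ht0.le (by ring)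
  have : α ((1 - t) • x + t • y) = 0 := by
    simp only [map_add, map_smul, smul_eq_mul]
    field_simp [ht]
    have h' : t * (α x - α y) = α x := by rw [ht]; exact div_mul_cancel₀ _ hden.ne'
    linear_combination -h'
  exact root_ne hcr hK hα hz this

end Chamber

section Facet
variable {r : ℕ} {A : Finset (Set (Vr r))} {R : Finset (Vr r →ₗ[ℝ] ℝ)}
variable {K : Set (Vr r)} {b : Fin r → Vr r}


lemma sum_add_single (b : Fin r → Vr r) (c : Fin r → ℝ) (i : Fin r) (t : ℝ) :
    ∑ j, (c j + if j = i then t else 0) • b j = (∑ j, c j • b j) + t • b i := by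
  simp only [add_smul]
  rw [Finset.sum_add_distrib]
  congr 1
  have h : ∀ j ∈ Finset.univ, (if j = i then t else 0) • b j
      = if j = i then t • b i else 0 := by
    intro j _
    by_cases h : j = i
    · subst h; simp
    · simp [h]
  rw [Finset.sum_congr rfl h, Finset.sum_ite_eq' Finset.univ i]
  simp

lemma exists_generic (b : Fin r → Vr r) (i : Fin r) (S : Finset (Vr r →ₗ[ℝ] ℝ))
    (hS : ∀ α ∈ S, ∃ j, j ≠ i ∧ α (b j) ≠ 0) :
    ∃ c : Fin r → ℝ, (∀ j, j ≠ i → 0 < c j) ∧ c i = 0 ∧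
      ∀ α ∈ S, α (∑ j, c j • b j) ≠ 0 := by
  classical
  induction S using Finset.induction_on with
  | empty =>
    exact ⟨fun j => if j = i then 0 else 1, fun j hj => by simp [hj], by simp,
      fun α hα => absurd hα (Finset.notMem_empty α)⟩
  | @insert α S hα ih =>
    obtain ⟨c, hcpos, hci, hc⟩ := ih fun β hβ => hS β (Finset.mem_insert_of_mem hβ)
    obtain ⟨j₀, hj₀i, hj₀⟩ := hS α (Finset.mem_insert_self α S)
    set x := ∑ j, c j • b j with hx
    set T : Finset ℝ := insert 0 ((insert α S).image (fun β => -β x / β (b j₀))) with hT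
    obtain ⟨t, ht, htT⟩ := (Set.Ioi_infinite (0:ℝ)).exists_notMem_finset T
    have ht0 : (0:ℝ) < t := ht
    refine ⟨fun j => c j + if j = j₀ then t else 0, ?_, ?_, ?_⟩
    · intro j hj
      rcases eq_or_ne j j₀ with rfl | hne
      · simp only [if_pos rfl]
        exact add_pos_of_nonneg_of_pos (hcpos j hj).le ht0
      · simp only [if_neg hne, add_zero]
        exact hcpos j hj
    · simp only [if_neg (fun h => hj₀i (h ▸ rfl) : ¬ i = j₀), hci, add_zero]
    · intro β hβ
      have hsum : ∑ j, (c j + if j = j₀ then t else 0) • b j = x + t • b j₀ := by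
        rw [hx]; exact sum_add_single b c j₀ t
      rw [hsum, map_add, map_smul, smul_eq_mul]
      intro heq
      by_cases hb0 : β (b j₀) = 0
      · rw [hb0, mul_zero, add_zero] at heq
        rcases Finset.mem_insert.mp hβ with rfl | hβS
        · -- β = α : α (b j₀) ≠ 0 contradiction
          exact hj₀ hb0
        · exact hc β hβS heq
      · have : t = -β x / β (b j₀) := by field_simp; linarith
        exact htT (by
          rw [hT]
          exact Finset.mem_insert_of_mem (Finset.mem_image.mpr ⟨β, hβ, this.symm⟩))

lemma lin_indep_coords (hb : LinearIndependent ℝ b) {c d : Fin r → ℝ}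
    (h : ∑ j, c j • b j = ∑ j, d j • b j) : c = d := by
  have h0 : ∑ j, (c j - d j) • b j = 0 := by
    simp only [sub_smul]
    rw [Finset.sum_sub_distrib, h, sub_self]
  funext j
  have := Fintype.linearIndependent_iff.mp hb _ h0 j
  linarith

lemma facet_root (hcr : IsCrystArr A R) (hK : K ∈ chambers A)
    (hb : LinearIndependent ℝ b)
    (hKb : K = { x | ∃ c : Fin r → ℝ, (∀ i, 0 < c i) ∧ x = ∑ i, c i • b i })
    (i : Fin r) :
    ∃ γ ∈ R, (∀ j, j ≠ i → γ (b j) = 0) ∧ 0 < γ (b i) := by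
  classical
  have hnb : Nonempty (Fin r) := ⟨i⟩
  by_cases hex : ∃ α ∈ R, ∀ j, j ≠ i → α (b j) = 0
  · obtain ⟨α, hαR, hαj⟩ := hex
    have hbi : α (b i) ≠ 0 := by
      intro h0
      have hcard : Fintype.card (Fin r) = Module.finrank ℝ (Vr r) := by
        rw [Module.finrank_fintype_fun_eq_card]
      have hsp : Submodule.span ℝ (Set.range b) = ⊤ :=
        hb.span_eq_top_of_card_eq_finrank hcard
      have : α = (0 : Vr r →ₗ[ℝ] ℝ) := by
        apply LinearMap.ext_on hsp
        rintro _ ⟨j, rfl⟩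
        rcases eq_or_ne j i with rfl | h
        · simpa using h0
        · simpa using hαj j h
      exact hcr.nonzero α hαR this
    rcases lt_or_gt_of_ne hbi with h | h
    · exact ⟨-α, hcr.neg_mem α hαR, fun j hj => by simp [hαj j hj],
        by simpa using neg_pos.mpr h⟩
    · exact ⟨α, hαR, hαj, h⟩
  · exfalso
    push_neg at hex
    obtain ⟨c, hcpos, hci, hc⟩ := exists_generic b i R fun α hα => hex α hα
    set x := ∑ j, c j • b j with hxdef
    have hxΩ : x ∈ (⋃₀ (A : Set (Set (Vr r))))ᶜ := by
      intro hmem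
      obtain ⟨H, hH, hxH⟩ := hmem
      have : H ∈ (A : Set (Set (Vr r))) := hH
      rw [hcr.hyps] at this
      obtain ⟨α, hαR, rfl⟩ := this
      exact hc α hαR hxH
    set Ω := (⋃₀ (A : Set (Set (Vr r))))ᶜ
    have hΩopen : IsOpen Ω := isOpen_compl hcr
    set K'' := connectedComponentIn Ω x with hK''
    have hK''open : IsOpen K'' := hΩopen.connectedComponentIn
    have hxK'' : x ∈ K'' := mem_connectedComponentIn hxΩ
    -- find ε > 0 with x + ε • b i ∈ K''
    have htend : Filter.Tendsto (fun ε : ℝ => x + ε • b i) (nhds 0) (nhds x) := by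
      have hcont : Continuous (fun ε : ℝ => x + ε • b i) := by continuity
      simpa using hcont.tendsto 0
    have hev : ∀ᶠ ε : ℝ in nhds 0, x + ε • b i ∈ K'' :=
      htend.eventually (hK''open.mem_nhds hxK'')
    obtain ⟨ε, hεK'', hε0⟩ :=
      ((hev.filter_mono nhdsWithin_le_nhds).and
        (eventually_mem_nhdsWithin (s := Set.Ioi (0:ℝ)))).exists
    have hε : (0:ℝ) < ε := hε0
    have hzK : x + ε • b i ∈ K := by
      rw [hKb]
      refine ⟨fun j => c j + if j = i then ε else 0, fun j => ?_, ?_⟩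
      · rcases eq_or_ne j i with rfl | h
        · simpa [hci] using hε
        · simpa [h] using hcpos j h
      · rw [hxdef]
        exact (sum_add_single b c i ε).symm
    -- components agree
    have hKeq : K = K'' := by
      have h1 : connectedComponentIn Ω (x + ε • b i) = K := chamber_cci hK hzK
      have h2 : connectedComponentIn Ω (x + ε • b i) = K'' :=
        (connectedComponentIn_eq hεK'').symm
      rw [← h1, h2]
    have hxK : x ∈ K := hKeq ▸ hxK''
    rw [hKb] at hxK
    obtain ⟨d, hd, hxd⟩ := hxK
    have : d = c := lin_indep_coords hb (hxd.symm.trans rfl)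
    rw [this] at hd
    exact absurd hci (hd i).ne'

end Facet

section Dichotomy
variable {r : ℕ} {A : Finset (Set (Vr r))} {R : Finset (Vr r →ₗ[ℝ] ℝ)}
variable {K : Set (Vr r)} {b : Fin r → Vr r}

lemma chamber_nonempty (hcr : IsCrystArr A R) (hK : K ∈ chambers A) : K.Nonempty := by
  obtain ⟨b, hb, hKb⟩ := chamber_desc hcr hK
  exact ⟨_, chamber_nonempty' hKb⟩

lemma finrank_Vr : Module.finrank ℝ (Vr r) = r := by
  rw [Module.finrank_fintype_fun_eq_card, Fintype.card_fin]

lemma range_eq_top_of_ne {γ : Vr r →ₗ[ℝ] ℝ} {x : Vr r} (hx : γ x ≠ 0) :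
    LinearMap.range γ = ⊤ := by
  rw [Submodule.eq_top_iff']
  intro y
  exact ⟨(y / γ x) • x, by rw [map_smul, smul_eq_mul, div_mul_cancel₀ _ hx]⟩

lemma finrank_ker_eq {γ : Vr r →ₗ[ℝ] ℝ} {x : Vr r} (hx : γ x ≠ 0) :
    Module.finrank ℝ (LinearMap.ker γ) = r - 1 := by
  have h := LinearMap.finrank_range_add_finrank_ker γ
  rw [range_eq_top_of_ne hx, finrank_top, finrank_Vr, Module.finrank_self] at h
  omega

lemma card_ne_sub (i : Fin r) : Fintype.card {j : Fin r // j ≠ i} = r - 1 := by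
  simp [Fintype.card_subtype_compl, Fintype.card_fin]

lemma gamma_mem_BK (hcr : IsCrystArr A R) (hK : K ∈ chambers A)
    (hb : LinearIndependent ℝ b)
    (hKb : K = { x | ∃ c : Fin r → ℝ, (∀ i, 0 < c i) ∧ x = ∑ i, c i • b i })
    {γ : Vr r →ₗ[ℝ] ℝ} (hγR : γ ∈ R) {i : Fin r}
    (hγ0 : ∀ j, j ≠ i → γ (b j) = 0) (hγpos : 0 < γ (b i)) :
    γ ∈ BK A R K := by
  rw [BK, Finset.mem_filter]
  have hKpos : K ⊆ {x | 0 ≤ γ x} := by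
    rintro x hx
    rw [hKb] at hx
    obtain ⟨c, hc, rfl⟩ := hx
    have : γ (∑ j, c j • b j) = c i * γ (b i) := by
      rw [map_sum]
      rw [Finset.sum_eq_single i]
      · simp
      · intro j _ hj
        simp [hγ0 j hj]
      · intro h; exact absurd (Finset.mem_univ i) h
    rw [Set.mem_setOf_eq, this]
    exact (mul_pos (hc i) hγpos).le
  refine ⟨hγR, ⟨?_, ?_⟩, hKpos⟩
  · -- ker0 γ ∈ A
    have : ker0 γ ∈ (A : Set (Set (Vr r))) := by
      rw [hcr.hyps]; exact ⟨γ, hγR, rfl⟩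
    exact this
  · -- spanDim (ker0 γ ∩ closure K) = r - 1
    apply le_antisymm
    · have hsub : ker0 γ ∩ closure K ⊆ (LinearMap.ker γ : Submodule ℝ (Vr r)) :=
        fun x hx => hx.1
      have := Submodule.finrank_mono (Submodule.span_le.mpr hsub)
      rw [finrank_ker_eq (x := b i) hγpos.ne'] at this
      exact this
    · have hmem : ∀ j : {j : Fin r // j ≠ i}, b j ∈ ker0 γ ∩ closure K := fun j =>
        ⟨hγ0 j j.2, mem_closure_basis hKb j⟩
      have hind : LinearIndependent ℝ (fun j : {j : Fin r // j ≠ i} => b j) :=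
        hb.comp _ Subtype.val_injective
      have hle : Submodule.span ℝ (Set.range (fun j : {j : Fin r // j ≠ i} => b j))
          ≤ Submodule.span ℝ (ker0 γ ∩ closure K) := by
        apply Submodule.span_mono
        rintro _ ⟨j, rfl⟩
        exact hmem j
      have := Submodule.finrank_mono hle
      rw [finrank_span_eq_card hind, card_ne_sub i] at this
      exact this

lemma nonneg_mem_coneGen (hcr : IsCrystArr A R) (hK : K ∈ chambers A)
    (hb : LinearIndependent ℝ b)
    (hKb : K = { x | ∃ c : Fin r → ℝ, (∀ i, 0 < c i) ∧ x = ∑ i, c i • b i })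
    {α : Vr r →ₗ[ℝ] ℝ} (hα : ∀ j, 0 ≤ α (b j)) :
    α ∈ coneGen (BK A R K) := by
  classical
  choose γ hγR hγ0 hγpos using fun i => facet_root hcr hK hb hKb i
  have hγinj : Function.Injective γ := by
    intro j k hjk
    by_contra hne
    have h1 : γ j (b j) = 0 := by rw [hjk]; exact hγ0 k j hne
    exact absurd h1 (hγpos j).ne'
  have hγBK : ∀ i, γ i ∈ BK A R K := fun i =>
    gamma_mem_BK hcr hK hb hKb (hγR i) (hγ0 i) (hγpos i)
  set c : (Vr r →ₗ[ℝ] ℝ) → ℝ := fun v =>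
    ∑ j ∈ Finset.univ.filter (fun j => γ j = v), α (b j) / γ j (b j) with hc
  have hcnn : ∀ v, 0 ≤ c v := fun v =>
    Finset.sum_nonneg fun j _ => div_nonneg (hα j) (hγpos j).le
  refine ⟨c, hcnn, ?_⟩
  set T : Finset (Vr r →ₗ[ℝ] ℝ) := Finset.univ.image γ with hT
  have hTsub : T ⊆ BK A R K := by
    intro v hv
    obtain ⟨j, _, rfl⟩ := Finset.mem_image.mp hv
    exact hγBK j
  have hstep1 : ∑ v ∈ BK A R K, c v • v = ∑ v ∈ T, c v • v := by
    symm
    apply Finset.sum_subset hTsub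
    intro v _ hvT
    have : c v = 0 := by
      rw [hc]
      apply Finset.sum_eq_zero
      intro j hj
      exact absurd (Finset.mem_image.mpr ⟨j, Finset.mem_univ j,
        (Finset.mem_filter.mp hj).2⟩) hvT
    rw [this, zero_smul]
  have hcγ : ∀ j, c (γ j) = α (b j) / γ j (b j) := by
    intro j
    have hfil : Finset.univ.filter (fun k => γ k = γ j) = {j} := by
      ext k
      simp only [Finset.mem_filter, Finset.mem_univ, true_and, Finset.mem_singleton]
      exact ⟨fun h => hγinj h, fun h => h ▸ rfl⟩
    show (∑ k ∈ Finset.univ.filter (fun k => γ k = γ j), α (b k) / γ k (b k)) = _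
    rw [hfil, Finset.sum_singleton]
  have hstep2 : ∑ v ∈ T, c v • v = ∑ j, (α (b j) / γ j (b j)) • γ j := by
    rw [hT, Finset.sum_image (fun j _ k _ h => hγinj h)]
    exact Finset.sum_congr rfl fun j _ => by rw [hcγ j]
  rw [hstep1, hstep2]
  have hcard : Fintype.card (Fin r) = Module.finrank ℝ (Vr r) := by
    rw [finrank_Vr, Fintype.card_fin]
  have hsp : Submodule.span ℝ (Set.range b) = ⊤ :=
    hb.span_eq_top_of_card_eq_finrank' hcard
  apply LinearMap.ext_on hsp
  rintro _ ⟨k, rfl⟩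
  rw [LinearMap.sum_apply]
  rw [Finset.sum_eq_single k]
  · rw [LinearMap.smul_apply, smul_eq_mul, div_mul_cancel₀ _ (hγpos k).ne']
  · intro j _ hj
    rw [LinearMap.smul_apply, smul_eq_mul, hγ0 j k (Ne.symm hj), mul_zero]
  · intro h; exact absurd (Finset.mem_univ k) h

lemma root_dichotomy (hcr : IsCrystArr A R) (hK : K ∈ chambers A)
    {α : Vr r →ₗ[ℝ] ℝ} (hα : α ∈ R) :
    α ∈ coneGen (BK A R K) ∨ -α ∈ coneGen (BK A R K) := by
  obtain ⟨b, hb, hKb⟩ := chamber_desc hcr hK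
  have hx₀ : (∑ i, b i) ∈ K := chamber_nonempty' hKb
  rcases lt_or_gt_of_ne (root_ne hcr hK hα hx₀) with h | h
  · right
    have hneg : (-α : Vr r →ₗ[ℝ] ℝ) ∈ R := hcr.neg_mem α hα
    have hpos : ∀ y ∈ K, 0 < (-α) y := fun y hy =>
      sign_const hcr hK hKb hneg hx₀ hy (by simpa using neg_pos.mpr h)
    apply nonneg_mem_coneGen hcr hK hb hKb
    intro j
    have := closure_halfspace (α := -α) (fun y hy => (hpos y hy).le)
      (mem_closure_basis hKb j)
    exact this
  · left
    have hpos : ∀ y ∈ K, 0 < α y := fun y hy =>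
      sign_const hcr hK hKb hα hx₀ hy h
    apply nonneg_mem_coneGen hcr hK hb hKb
    intro j
    exact closure_halfspace (α := α) (fun y hy => (hpos y hy).le)
      (mem_closure_basis hKb j)

lemma root_not_both (hcr : IsCrystArr A R) (hK : K ∈ chambers A)
    {α : Vr r →ₗ[ℝ] ℝ} (hα : α ∈ R) :
    ¬(α ∈ coneGen (BK A R K) ∧ -α ∈ coneGen (BK A R K)) := by
  rintro ⟨h1, h2⟩
  obtain ⟨x₀, hx₀⟩ := chamber_nonempty hcr hK
  have hv : ∀ v ∈ BK A R K, 0 ≤ v x₀ := fun v hv => (BK_pos hcr hK hv hx₀).le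
  have e1 := coneGen_eval_nonneg hv h1
  have e2 := coneGen_eval_nonneg hv h2
  rw [LinearMap.neg_apply] at e2
  exact root_ne hcr hK hα hx₀ (le_antisymm (by linarith) e1)

end Dichotomy

section RhoFacts
variable {r : ℕ} {A : Finset (Set (Vr r))} {R : Finset (Vr r →ₗ[ℝ] ℝ)}
variable {K K' : Set (Vr r)}

lemma mem_RplusF {α : Vr r →ₗ[ℝ] ℝ} :
    α ∈ RplusF A R K ↔ α ∈ R ∧ α ∈ coneGen (BK A R K) := Finset.mem_filter

lemma neg_bij_diff (hcr : IsCrystArr A R) (hK : K ∈ chambers A) (hK' : K' ∈ chambers A)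
    {α : Vr r →ₗ[ℝ] ℝ} (hα : α ∈ RplusF A R K \ RplusF A R K') :
    -α ∈ RplusF A R K' \ RplusF A R K := by
  rw [Finset.mem_sdiff] at hα ⊢
  obtain ⟨h1, h2⟩ := hα
  have hαR : α ∈ R := (mem_RplusF.mp h1).1
  have hnR : -α ∈ R := hcr.neg_mem α hαR
  constructor
  · rw [mem_RplusF]
    refine ⟨hnR, ?_⟩
    rcases root_dichotomy hcr hK' hαR with h | h
    · exact absurd (mem_RplusF.mpr ⟨hαR, h⟩) h2
    · exact h
  · rw [mem_RplusF]
    rintro ⟨-, hcone⟩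
    exact root_not_both hcr hK hαR ⟨(mem_RplusF.mp h1).2, hcone⟩

lemma sum_diff_neg (hcr : IsCrystArr A R) (hK : K ∈ chambers A) (hK' : K' ∈ chambers A) :
    ∑ α ∈ RplusF A R K \ RplusF A R K', α
      = - ∑ α ∈ RplusF A R K' \ RplusF A R K, α := by
  rw [← Finset.sum_neg_distrib]
  apply Finset.sum_nbij' (fun α => -α) (fun α => -α)
  · intro a ha; exact neg_bij_diff hcr hK hK' ha
  · intro a ha
    have := neg_bij_diff hcr hK' hK ha
    simpa using this
  · intro a _; simp
  · intro a _; simp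
  · intro a _; simp

lemma rho_diff (hcr : IsCrystArr A R) (hK : K ∈ chambers A) (hK' : K' ∈ chambers A) :
    rhoK A R K' - rhoK A R K = ∑ α ∈ RplusF A R K' \ RplusF A R K, α := by
  set P := RplusF A R K
  set P' := RplusF A R K'
  have hsplit : ∀ (S T : Finset (Vr r →ₗ[ℝ] ℝ)),
      ∑ α ∈ S, α = (∑ α ∈ S ∩ T, α) + ∑ α ∈ S \ T, α := by
    intro S T
    rw [Finset.sum_inter_add_sum_sdiff]
  have key : (∑ α ∈ P', α) - ∑ α ∈ P, α
      = (∑ α ∈ P' \ P, α) + ∑ α ∈ P' \ P, α := by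
    rw [hsplit P' P, hsplit P P', Finset.inter_comm P P']
    have := sum_diff_neg hcr hK hK' (K := K) (K' := K')
    rw [this]
    abel
  rw [rhoK, rhoK]
  show (1/2 : ℝ) • ∑ α ∈ P', α - (1/2 : ℝ) • ∑ α ∈ P, α = _
  refine (smul_sub (1/2 : ℝ) (∑ α ∈ P', α) (∑ α ∈ P, α)).symm.trans ?_
  rw [key]
  rw [← two_smul ℝ (∑ α ∈ P' \ P, α), smul_smul]
  norm_num

lemma rho_mem_SK (hcr : IsCrystArr A R) (hK : K ∈ chambers A) (hK' : K' ∈ chambers A) :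
    rhoK A R K ∈ SK A R K' := by
  refine ⟨∑ α ∈ RplusF A R K' \ RplusF A R K, α, ?_, ?_⟩
  · apply coneGen_sum
    intro α hα
    exact (mem_RplusF.mp (Finset.mem_sdiff.mp hα).1).2
  · rw [← rho_diff hcr hK hK']
    abel

lemma two_rho_int (hK : K ∈ chambers A) :
    (2 : ℝ) • rhoK A R K ∈ Submodule.span ℤ (R : Set (Vr r →ₗ[ℝ] ℝ)) := by
  rw [rhoK, smul_smul]
  norm_num
  exact Submodule.sum_mem _ fun α hα =>
    Submodule.subset_span (Finset.mem_coe.mpr ((Finset.filter_subset _ _) hα))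

end RhoFacts

section Cover
variable {r : ℕ} {A : Finset (Set (Vr r))} {R : Finset (Vr r →ₗ[ℝ] ℝ)}
variable {K : Set (Vr r)}

lemma combo_pos {a b u v : ℝ} (ha : 0 ≤ a) (hb : 0 ≤ b) (hab : a + b = 1)
    (hu : 0 < u) (hv : 0 < v) : 0 < a * u + b * v := by
  rcases eq_or_lt_of_le ha with h | h
  · have : b = 1 := by linarith
    rw [← h, this]; simpa using hv
  · exact add_pos_of_pos_of_nonneg (mul_pos h hu) (mul_nonneg hb hv.le)

/-- The open sign region attached to a subset `S` of `R`. -/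
def signRegion (R : Finset (Vr r →ₗ[ℝ] ℝ)) (S : Finset (Vr r →ₗ[ℝ] ℝ)) : Set (Vr r) :=
  { y | ∀ α ∈ R, (α ∈ S → 0 < α y) ∧ (α ∉ S → α y < 0) }

lemma signRegion_convex (S : Finset (Vr r →ₗ[ℝ] ℝ)) : Convex ℝ (signRegion R S) := by
  intro y hy z hz a b ha hb hab
  intro α hα
  constructor
  · intro hS
    have h1 := (hy α hα).1 hS
    have h2 := (hz α hα).1 hS
    simpa [map_add, map_smul, smul_eq_mul] using combo_pos ha hb hab h1 h2
  · intro hS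
    have h1 := (hy α hα).2 hS
    have h2 := (hz α hα).2 hS
    have := combo_pos ha hb hab (neg_pos.mpr h1) (neg_pos.mpr h2)
    simp only [map_add, map_smul, smul_eq_mul]
    nlinarith

lemma chamber_eq_signRegion (hcr : IsCrystArr A R) (hK : K ∈ chambers A)
    {x₀ : Vr r} (hx₀ : x₀ ∈ K) :
    K = signRegion R (R.filter (fun α => 0 < α x₀)) := by
  obtain ⟨b, hb, hKb⟩ := chamber_desc hcr hK
  set S := R.filter (fun α => 0 < α x₀) with hS
  apply Set.Subset.antisymm
  · intro y hy α hα
    constructor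
    · intro hmem
      exact sign_const hcr hK hKb hα hx₀ hy (Finset.mem_filter.mp hmem).2
    · intro hmem
      have hneg : α x₀ < 0 := by
        rcases lt_or_gt_of_ne (root_ne hcr hK hα hx₀) with h | h
        · exact h
        · exact absurd (Finset.mem_filter.mpr ⟨hα, h⟩) hmem
      have := sign_const hcr hK hKb (hcr.neg_mem α hα) hx₀ hy
        (by simpa using neg_pos.mpr hneg)
      simpa using this
  · have hx₀S : x₀ ∈ signRegion R S := by
      intro α hα
      refine ⟨fun h => (Finset.mem_filter.mp h).2, fun h => ?_⟩
      rcases lt_or_gt_of_ne (root_ne hcr hK hα hx₀) with h' | h'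
      · exact h'
      · exact absurd (Finset.mem_filter.mpr ⟨hα, h'⟩) h
    have hsub : signRegion R S ⊆ (⋃₀ (A : Set (Set (Vr r))))ᶜ := by
      intro y hy hmem
      obtain ⟨H, hH, hyH⟩ := hmem
      have : H ∈ (A : Set (Set (Vr r))) := hH
      rw [hcr.hyps] at this
      obtain ⟨α, hαR, rfl⟩ := this
      rcases (hy α hαR) with ⟨h1, h2⟩
      by_cases hm : α ∈ S
      · exact (h1 hm).ne' hyH
      · exact (h2 hm).ne hyH
    have := (signRegion_convex S).isPreconnected.subset_connectedComponentIn hx₀S hsub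
    rw [chamber_cci hK hx₀] at this
    exact this

lemma chambers_finite (hcr : IsCrystArr A R) : (chambers A).Finite := by
  apply Set.Finite.subset
    (Set.Finite.image (fun S => signRegion R S) (R.powerset : Finset _).finite_toSet)
  intro K hK
  obtain ⟨x₀, hx₀⟩ := chamber_nonempty hcr hK
  exact ⟨R.filter (fun α => 0 < α x₀), Finset.mem_coe.mpr
    (Finset.mem_powerset.mpr (Finset.filter_subset _ _)),
    (chamber_eq_signRegion hcr hK hx₀).symm⟩

lemma dense_compl_arr (hcr : IsCrystArr A R) : Dense (⋃₀ (A : Set (Set (Vr r))))ᶜ := by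
  have key : ∀ s : Finset (Set (Vr r)),
      (∀ H ∈ s, ∃ α : Vr r →ₗ[ℝ] ℝ, α ≠ 0 ∧ H = ker0 α) →
      Dense (⋃₀ (s : Set (Set (Vr r))))ᶜ := by
    intro s
    induction s using Finset.induction_on with
    | empty => intro _; simp
    | @insert H s hH ih =>
      intro hyp
      have h1 : Dense (⋃₀ (s : Set (Set (Vr r))))ᶜ :=
        ih fun H' hH' => hyp H' (Finset.mem_insert_of_mem hH')
      obtain ⟨α, hα0, rfl⟩ := hyp H (Finset.mem_insert_self H s)
      have hker : (ker0 α) = (LinearMap.ker α : Submodule ℝ (Vr r)) := by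
        ext x; simp [ker0, LinearMap.mem_ker]
      have hdense : Dense (ker0 α)ᶜ := by
        rw [← interior_eq_empty_iff_dense_compl]
        by_contra hne
        have : (LinearMap.ker α : Submodule ℝ (Vr r)) = ⊤ := by
          apply Submodule.eq_top_of_nonempty_interior'
          rw [← hker]
          exact Set.nonempty_iff_ne_empty.mpr hne
        exact hα0 (LinearMap.ker_eq_top.mp this)
      have hopen : IsOpen (ker0 α)ᶜ := (ker0_closed α).isOpen_compl
      have heq : (⋃₀ ((insert (ker0 α) s : Finset (Set (Vr r))) : Set (Set (Vr r))))ᶜ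
          = (ker0 α)ᶜ ∩ (⋃₀ (s : Set (Set (Vr r))))ᶜ := by
        rw [Finset.coe_insert, Set.sUnion_insert, Set.compl_union]
      rw [heq]
      exact hdense.inter_of_isOpen_left h1 hopen
  apply key
  intro H hH
  have : H ∈ (A : Set (Set (Vr r))) := hH
  rw [hcr.hyps] at this
  obtain ⟨α, hαR, rfl⟩ := this
  exact ⟨α, hcr.nonzero α hαR, rfl⟩

lemma exists_chamber_closure (hcr : IsCrystArr A R) (x : Vr r) :
    ∃ K ∈ chambers A, x ∈ closure K := by
  have hx : x ∈ closure (⋃₀ (A : Set (Set (Vr r))))ᶜ := dense_compl_arr hcr x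
  have hsub : (⋃₀ (A : Set (Set (Vr r))))ᶜ ⊆ ⋃ K ∈ chambers A, K := by
    intro y hy
    exact Set.mem_biUnion ⟨y, hy, rfl⟩ (mem_connectedComponentIn hy)
  have := closure_mono hsub hx
  rw [Set.Finite.closure_biUnion (chambers_finite hcr)] at this
  obtain ⟨K, hK, hxK⟩ := Set.mem_iUnion₂.mp this
  exact ⟨K, hK, hxK⟩

end Cover

section Main
variable {r : ℕ} {A : Finset (Set (Vr r))} {R : Finset (Vr r →ₗ[ℝ] ℝ)}
variable {K : Set (Vr r)}

lemma SK_combo {y z ρ : Vr r →ₗ[ℝ] ℝ} {a b : ℝ} (hab : a + b = 1) :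
    a • (ρ - y) + b • (ρ - z) = ρ - (a • y + b • z) := by
  calc a • (ρ - y) + b • (ρ - z) = (a • ρ + b • ρ) - (a • y + b • z) := by
        rw [smul_sub, smul_sub]; abel
    _ = ρ - (a • y + b • z) := by rw [← add_smul, hab, one_smul]

lemma SK_convex : Convex ℝ (SK A R K) := by
  rintro f ⟨y, hy, rfl⟩ g ⟨z, hz, rfl⟩ a b ha hb hab
  exact ⟨a • y + b • z, coneGen_add (coneGen_smul ha hy) (coneGen_smul hb hz),
    SK_combo hab⟩

lemma SK_eval_le {f : Vr r →ₗ[ℝ] ℝ} (hf : f ∈ SK A R K) {x : Vr r}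
    (hx : x ∈ closure K) : f x ≤ rhoK A R K x := by
  obtain ⟨y, hy, rfl⟩ := hf
  have : 0 ≤ y x := coneGen_eval_nonneg (fun v hv => BK_nonneg_closure hv hx) hy
  rw [LinearMap.sub_apply]
  linarith

lemma Q_finite (hcr : IsCrystArr A R) :
    Set.Finite { f : Vr r →ₗ[ℝ] ℝ | ∃ K ∈ chambers A, f = rhoK A R K } := by
  have : { f : Vr r →ₗ[ℝ] ℝ | ∃ K ∈ chambers A, f = rhoK A R K }
      = (rhoK A R) '' chambers A := by
    ext f; constructor
    · rintro ⟨K, hK, rfl⟩; exact ⟨K, hK, rfl⟩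
    · rintro ⟨K, hK, rfl⟩; exact ⟨K, hK, rfl⟩
  rw [this]
  exact (chambers_finite hcr).image _

lemma rho_extreme (hcr : IsCrystArr A R) (hK : K ∈ chambers A) :
    rhoK A R K ∈ Set.extremePoints ℝ (⋂ K' ∈ chambers A, SK A R K') := by
  obtain ⟨x₀, hx₀⟩ := chamber_nonempty hcr hK
  constructor
  · exact Set.mem_iInter₂.mpr fun K' hK' => rho_mem_SK hcr hK hK'
  · intro f₁ hf₁ f₂ hf₂ hseg
    obtain ⟨y, hy, rfl⟩ := Set.mem_iInter₂.mp hf₁ K hK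
    obtain ⟨z, hz, rfl⟩ := Set.mem_iInter₂.mp hf₂ K hK
    obtain ⟨a, b, ha, hb, hab, heq⟩ := hseg
    rw [SK_combo hab] at heq
    have hsum : a • y + b • z = 0 := by
      have := sub_eq_self.mp heq
      exact this
    have heval : a * y x₀ + b * z x₀ = 0 := by
      have := congrArg (fun g : Vr r →ₗ[ℝ] ℝ => g x₀) hsum
      simpa using this
    have hy0 : 0 ≤ y x₀ := coneGen_eval_nonneg
      (fun v hv => (BK_pos hcr hK hv hx₀).le) hy
    have hz0 : 0 ≤ z x₀ := coneGen_eval_nonneg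
      (fun v hv => (BK_pos hcr hK hv hx₀).le) hz
    have hyx : y x₀ = 0 := by nlinarith
    have hzx : z x₀ = 0 := by nlinarith
    have hY : y = 0 := coneGen_eval_eq_zero (fun v hv => BK_pos hcr hK hv hx₀) hy hyx
    have hZ : z = 0 := coneGen_eval_eq_zero (fun v hv => BK_pos hcr hK hv hx₀) hz hzx
    rw [hY, sub_zero]

lemma hull_eq (hcr : IsCrystArr A R) :
    (⋂ K ∈ chambers A, SK A R K) =
      convexHull ℝ { f : Vr r →ₗ[ℝ] ℝ | ∃ K ∈ chambers A, f = rhoK A R K } := by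
  set Q := { f : Vr r →ₗ[ℝ] ℝ | ∃ K ∈ chambers A, f = rhoK A R K } with hQ
  apply Set.Subset.antisymm
  · -- hard direction by separation
    intro f hf
    by_contra hfQ
    set E := EuclideanSpace ℝ (Fin r)
    set φ : (Vr r →ₗ[ℝ] ℝ) ≃ₗ[ℝ] E :=
      ((Pi.basisFun ℝ (Fin r)).dualBasis.equivFun).trans
        (WithLp.linearEquiv 2 ℝ (Fin r → ℝ)).symm with hφ
    have himg : convexHull ℝ (φ '' Q) = φ '' convexHull ℝ Q :=
      (φ.toLinearMap.image_convexHull Q).symm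
    have hnot : φ f ∉ convexHull ℝ (φ '' Q) := by
      rw [himg]
      rintro ⟨g, hg, hgf⟩
      exact hfQ (φ.injective hgf ▸ hg)
    have hclosed : IsClosed (convexHull ℝ (φ '' Q)) :=
      ((Q_finite hcr).image _).isClosed_convexHull ℝ
    obtain ⟨g, u, hg1, hg2⟩ :=
      geometric_hahn_banach_closed_point (convex_convexHull ℝ _) hclosed hnot
    set ψ : (Vr r →ₗ[ℝ] ℝ) →ₗ[ℝ] ℝ := (g : E →ₗ[ℝ] ℝ).comp φ.toLinearMap with hψ
    set x : Vr r := (Module.evalEquiv ℝ (Vr r)).symm ψ with hx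
    have happ : ∀ h : Vr r →ₗ[ℝ] ℝ, h x = ψ h := fun h =>
      Module.apply_evalEquiv_symm_apply (R := ℝ) (M := Vr r) h ψ
    obtain ⟨K₀, hK₀, hxK₀⟩ := exists_chamber_closure hcr x
    have h1 : f x ≤ rhoK A R K₀ x :=
      SK_eval_le (Set.mem_iInter₂.mp hf K₀ hK₀) hxK₀
    have h2 : rhoK A R K₀ x < f x := by
      have hmem : φ (rhoK A R K₀) ∈ convexHull ℝ (φ '' Q) :=
        subset_convexHull ℝ _ ⟨rhoK A R K₀, ⟨K₀, hK₀, rfl⟩, rfl⟩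
      have := hg1 _ hmem
      have h3 : rhoK A R K₀ x = g (φ (rhoK A R K₀)) := happ _
      have h4 : f x = g (φ f) := happ _
      rw [h3, h4]
      linarith
    linarith
  · apply convexHull_min
    · rintro f ⟨K, hK, rfl⟩
      exact Set.mem_iInter₂.mpr fun K' hK' => rho_mem_SK hcr hK hK'
    · exact convex_iInter fun K => convex_iInter fun hK => SK_convex

end Main

end Stmt11Aux


/-- `ρ^K ∈ S^{K'}` for all chambers `K, K'`; the points `ρ^K` are
exactly the vertices of the convex polytope `P = ⋂_K S^K`, which is integral
in `(1/2)M`. -/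
theorem stmt11 {r : ℕ} (A : Finset (Set (Vr r))) (R : Finset (Vr r →ₗ[ℝ] ℝ))
    (hcr : IsCrystArr A R) :
    (∀ K ∈ chambers A, ∀ K' ∈ chambers A, rhoK A R K ∈ SK A R K') ∧
    { f | ∃ K ∈ chambers A, f = rhoK A R K } =
      Set.extremePoints ℝ (⋂ K ∈ chambers A, SK A R K) ∧
    (⋂ K ∈ chambers A, SK A R K) =
      convexHull ℝ { f | ∃ K ∈ chambers A, f = rhoK A R K } ∧
    ∀ K ∈ chambers A, (2 : ℝ) • rhoK A R K ∈
      Submodule.span ℤ (R : Set (Vr r →ₗ[ℝ] ℝ)) := by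
  refine ⟨fun K hK K' hK' => Stmt11Aux.rho_mem_SK hcr hK hK', ?_,
    Stmt11Aux.hull_eq hcr, fun K hK => Stmt11Aux.two_rho_int hK⟩
  apply Set.Subset.antisymm
  · rintro f ⟨K, hK, rfl⟩
    exact Stmt11Aux.rho_extreme hcr hK
  · intro f hf
    rw [Stmt11Aux.hull_eq hcr] at hf
    exact extremePoints_convexHull_subset hf
end
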